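/- arXiv:2004.02468 — 7 statements merged into one kernel-verified Lean document; each statement's English description precedes it below -/
import Mathlib

section
/- Let I be a finite nonempty index set; for each C ∈ I let s_C ≥ 1 be an integer and let F_C, G_C : ℝ → ℝ be real trigonometric polynomials, and let λ > 0 be real. Then there exists a polynomial p ∈ ℂ[U, V, W], monic of degree s := Σ_{C∈I} s_C in U, such that for all u ∈ ℂ and all t ∈ ℝ: ∏_{C∈I} ∏_{j=1}^{s_C} ( u − λ·( F_C((t + 2π(j−1))/s_C) + i·G_C((t + 2π(j−1))/s_C) ) ) = p(u, exp(i t), exp(−i t)). -/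
open Finset Complex Real

/-- A real trigonometric polynomial:
`T(t) = a₀ + ∑_{k=1}^{N} (a_k cos(kt) + b_k sin(kt))`. -/
def IsRealTrigPoly (T : ℝ → ℝ) : Prop :=
  ∃ (N : ℕ) (a b : ℕ → ℝ), ∀ t : ℝ,
    T t = a 0 + ∑ k ∈ Finset.Icc 1 N, (a k * Real.cos (k * t) + b k * Real.sin (k * t))

noncomputable section BraidAux

namespace BraidAux

/-- The basic character `t ↦ exp(I k t / s)`. -/
def ch (s : ℕ) (k : ℤ) : ℝ → ℂ := fun t => Complex.exp (Complex.I * k * t / s)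

lemma ch_apply (s : ℕ) (k : ℤ) (t : ℝ) :
    ch s k t = Complex.exp (Complex.I * k * t / s) := rfl

lemma ch_add (s : ℕ) (k l : ℤ) : ch s (k + l) = ch s k * ch s l := by
  funext t
  simp only [ch, Pi.mul_apply, ← Complex.exp_add, ← add_div]
  congr 1
  push_cast
  ring

lemma ch_zero (s : ℕ) : ch s 0 = 1 := by
  funext t; simp [ch]

def chHom (s : ℕ) : Multiplicative ℤ →* (ℝ → ℂ) where
  toFun := fun k => ch s (Multiplicative.toAdd k)
  map_one' := ch_zero s
  map_mul' := fun k l => ch_add s _ _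

def phi (s : ℕ) : AddMonoidAlgebra ℂ ℤ →ₐ[ℂ] (ℝ → ℂ) :=
  AddMonoidAlgebra.lift ℂ (ℝ → ℂ) ℤ (chHom s)

def Rng (s : ℕ) : Subalgebra ℂ (ℝ → ℂ) := (phi s).range

lemma mem_Rng {s : ℕ} {f : ℝ → ℂ} :
    f ∈ Rng s ↔ ∃ c : ℤ →₀ ℂ, f = c.sum fun k a => a • ch s k := by
  constructor
  · rintro ⟨c, rfl⟩
    exact ⟨c.coeff, AddMonoidAlgebra.lift_apply (chHom s) c⟩
  · rintro ⟨c, rfl⟩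
    exact ⟨AddMonoidAlgebra.ofCoeff c, AddMonoidAlgebra.lift_apply (chHom s) _⟩

lemma ch_mem (s : ℕ) (k : ℤ) : ch s k ∈ Rng s := by
  refine mem_Rng.mpr ⟨Finsupp.single k 1, ?_⟩
  rw [Finsupp.sum_single_index (by rw [zero_smul])]
  rw [one_smul]

lemma Rng_eval {s : ℕ} {f : ℝ → ℂ} (h : f ∈ Rng s) :
    ∃ c : ℤ →₀ ℂ, ∀ t, f t = ∑ k ∈ c.support, c k * ch s k t := by
  obtain ⟨c, rfl⟩ := mem_Rng.mp h
  exact ⟨c, fun t => by simp [Finsupp.sum, Finset.sum_apply]⟩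

def chMHom (s : ℕ) (k : ℤ) : Multiplicative ℝ →* ℂ where
  toFun := fun t => ch s k (Multiplicative.toAdd t)
  map_one' := by simp [ch]
  map_mul' := fun t u => by
    simp only [ch, toAdd_mul, ← Complex.exp_add, ← add_div]
    congr 1
    push_cast
    ring

lemma chMHom_inj {s : ℕ} (hs : 1 ≤ s) : Function.Injective (chMHom s) := by
  intro k l hkl
  by_contra hne
  have hs0 : (s : ℝ) ≠ 0 := Nat.cast_ne_zero.mpr (by omega)
  have hkl' : ((k : ℝ) - l) ≠ 0 := sub_ne_zero.mpr (by exact_mod_cast hne)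
  set t0 : ℝ := (s : ℝ) * π / ((k : ℝ) - l) with ht0
  have h1 : ch s k t0 = ch s l t0 := DFunLike.congr_fun hkl (Multiplicative.ofAdd t0)
  have h2 : Complex.exp (Complex.I * k * t0 / s - Complex.I * l * t0 / s) = 1 := by
    rw [Complex.exp_sub]
    rw [ch_apply, ch_apply] at h1
    rw [h1, div_self (Complex.exp_ne_zero _)]
  have h3 : Complex.I * (k : ℂ) * (t0 : ℂ) / s - Complex.I * l * t0 / s = (π : ℂ) * Complex.I := by
    have hs0' : (s : ℂ) ≠ 0 := Nat.cast_ne_zero.mpr (by omega)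
    have hkl'' : ((k : ℂ) - l) ≠ 0 := by
      simpa using Complex.ofReal_ne_zero.mpr hkl'
    rw [ht0]
    push_cast
    field_simp
  rw [h3, Complex.exp_pi_mul_I] at h2
  norm_num at h2

lemma ch_lin_indep {s : ℕ} (hs : 1 ≤ s) (A : Finset ℤ) (d : ℤ → ℂ)
    (h : ∀ t : ℝ, ∑ k ∈ A, d k * ch s k t = 0) : ∀ k ∈ A, d k = 0 := by
  have li : LinearIndependent ℂ fun k : ℤ => ⇑(chMHom s k) :=
    (linearIndependent_monoidHom (Multiplicative ℝ) ℂ).comp (chMHom s) (chMHom_inj hs)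
  refine linearIndependent_iff'.mp li A d ?_
  funext x
  rw [Finset.sum_apply]
  simp only [Pi.smul_apply, smul_eq_mul, Pi.zero_apply]
  exact h (Multiplicative.toAdd x)

lemma Rng_one_periodic {f : ℝ → ℂ} (hf : f ∈ Rng 1) (t : ℝ) : f (t + 2 * π) = f t := by
  obtain ⟨c, hc⟩ := Rng_eval hf
  rw [hc, hc]
  refine Finset.sum_congr rfl fun k _ => ?_
  congr 1
  simp only [ch_apply]
  have : Complex.I * k * ((t + 2 * π : ℝ) : ℂ) / ((1 : ℕ) : ℂ)
      = Complex.I * k * (t : ℂ) / ((1 : ℕ) : ℂ) + (k : ℂ) * (2 * (π : ℂ) * Complex.I) := by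
    push_cast
    ring
  rw [this, Complex.exp_add, Complex.exp_int_mul_two_pi_mul_I, mul_one]

lemma descend {s : ℕ} (hs : 1 ≤ s) {f : ℝ → ℂ} (hf : f ∈ Rng s)
    (hper : ∀ t, f (t + 2 * π) = f t) : f ∈ Rng 1 := by
  obtain ⟨c, hc⟩ := Rng_eval hf
  have hs0 : (s : ℂ) ≠ 0 := Nat.cast_ne_zero.mpr (by omega)
  set w : ℤ → ℂ := fun k => Complex.exp (Complex.I * k * ((2 * π : ℝ) : ℂ) / s) with hw
  have hshift : ∀ (k : ℤ) (t : ℝ), ch s k (t + 2 * π) = w k * ch s k t := by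
    intro k t
    simp only [ch_apply, hw, ← Complex.exp_add]
    congr 1
    push_cast
    field_simp
    ring
  have hzero : ∀ k ∈ c.support, c k * w k - c k = 0 := by
    apply ch_lin_indep hs
    intro t
    have e1 := hc (t + 2 * π)
    rw [hper t, hc t] at e1
    simp only [hshift] at e1
    have : ∑ k ∈ c.support, (c k * w k - c k) * ch s k t
        = (∑ k ∈ c.support, c k * (w k * ch s k t)) - ∑ k ∈ c.support, c k * ch s k t := by
      rw [← Finset.sum_sub_distrib]
      exact Finset.sum_congr rfl fun k _ => by ring
    rw [this, ← e1, sub_self]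
  have hch : ∀ k ∈ c.support, ∃ m : ℤ, ch s k = ch 1 m := by
    intro k hk
    have hck : c k ≠ 0 := Finsupp.mem_support_iff.mp hk
    have hwk : w k = 1 := by
      have h0 := hzero k hk
      have h1 : c k * (w k - 1) = 0 := by linear_combination h0
      rcases mul_eq_zero.mp h1 with h | h
      · exact absurd h hck
      · exact sub_eq_zero.mp h
    obtain ⟨n, hn⟩ := Complex.exp_eq_one_iff.mp (hw ▸ hwk)
    have hpi : ((π : ℝ) : ℂ) ≠ 0 := Complex.ofReal_ne_zero.mpr Real.pi_ne_zero
    have hkn : (k : ℂ) = n * s := by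
      have h1 : (k : ℂ) * (2 * (π : ℂ) * Complex.I) = (n * s) * (2 * (π : ℂ) * Complex.I) := by
        field_simp at hn
        push_cast at hn ⊢
        linear_combination Complex.I * hn
      have h2 : (2 * (π : ℂ) * Complex.I) ≠ 0 := by
        simp [hpi, Complex.I_ne_zero]
      exact mul_right_cancel₀ h2 h1
    refine ⟨n, funext fun t => ?_⟩
    simp only [ch_apply]
    congr 1
    rw [hkn]
    push_cast
    field_simp
  have hf' : f = ∑ k ∈ c.support, c k • ch s k := by
    funext t
    rw [hc t, Finset.sum_apply]
    exact Finset.sum_congr rfl fun k _ => rfl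
  rw [hf']
  refine Subalgebra.sum_mem _ fun k hk => ?_
  obtain ⟨m, hm⟩ := hch k hk
  rw [hm]
  exact Subalgebra.smul_mem _ (ch_mem 1 m) _

lemma rescale_mem {h : ℝ → ℂ} (hh : h ∈ Rng 1) (s : ℕ) (hs : 1 ≤ s) (j : ℕ) :
    (fun t : ℝ => h ((t + 2 * Real.pi * (j : ℝ)) / (s : ℝ))) ∈ Rng s := by
  obtain ⟨c, hc⟩ := Rng_eval hh
  have hs0 : (s : ℂ) ≠ 0 := Nat.cast_ne_zero.mpr (by omega)
  have key : (fun t : ℝ => h ((t + 2 * Real.pi * (j : ℝ)) / (s : ℝ)))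
      = ∑ k ∈ c.support,
          (c k * Complex.exp (Complex.I * k * ((2 * Real.pi * (j : ℝ) : ℝ) : ℂ) / s)) • ch s k := by
    funext t
    rw [hc, Finset.sum_apply]
    refine Finset.sum_congr rfl fun k _ => ?_
    simp only [Pi.smul_apply, smul_eq_mul, ch_apply]
    rw [mul_assoc (c k), ← Complex.exp_add]
    congr 1
    push_cast
    field_simp
    ring
  rw [key]
  exact Subalgebra.sum_mem _ fun k _ => Subalgebra.smul_mem _ (ch_mem s k) _

lemma cos_mem (k : ℕ) : (fun t : ℝ => ((Real.cos ((k : ℝ) * t) : ℝ) : ℂ)) ∈ Rng 1 := by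
  have key : (fun t : ℝ => ((Real.cos ((k : ℝ) * t) : ℝ) : ℂ))
      = (2⁻¹ : ℂ) • ch 1 (k : ℤ) + (2⁻¹ : ℂ) • ch 1 (-(k : ℤ)) := by
    funext t
    simp only [Pi.add_apply, Pi.smul_apply, smul_eq_mul, ch_apply]
    have h1 : Complex.I * ((k : ℤ) : ℂ) * (t : ℂ) / ((1 : ℕ) : ℂ)
        = (((k : ℝ) * t : ℝ) : ℂ) * Complex.I := by push_cast; ring
    have h2 : Complex.I * ((-(k : ℤ) : ℤ) : ℂ) * (t : ℂ) / ((1 : ℕ) : ℂ)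
        = ((-((k : ℝ) * t) : ℝ) : ℂ) * Complex.I := by push_cast; ring
    rw [h1, h2, Complex.exp_mul_I, Complex.exp_mul_I, ← Complex.ofReal_cos,
      ← Complex.ofReal_sin, ← Complex.ofReal_cos, ← Complex.ofReal_sin,
      Real.cos_neg, Real.sin_neg]
    push_cast
    ring
  rw [key]
  exact add_mem (Subalgebra.smul_mem _ (ch_mem 1 _) _) (Subalgebra.smul_mem _ (ch_mem 1 _) _)

lemma sin_mem (k : ℕ) : (fun t : ℝ => ((Real.sin ((k : ℝ) * t) : ℝ) : ℂ)) ∈ Rng 1 := by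
  have key : (fun t : ℝ => ((Real.sin ((k : ℝ) * t) : ℝ) : ℂ))
      = (-(Complex.I) * 2⁻¹) • ch 1 (k : ℤ) + (Complex.I * 2⁻¹) • ch 1 (-(k : ℤ)) := by
    funext t
    simp only [Pi.add_apply, Pi.smul_apply, smul_eq_mul, ch_apply]
    have h1 : Complex.I * ((k : ℤ) : ℂ) * (t : ℂ) / ((1 : ℕ) : ℂ)
        = (((k : ℝ) * t : ℝ) : ℂ) * Complex.I := by push_cast; ring
    have h2 : Complex.I * ((-(k : ℤ) : ℤ) : ℂ) * (t : ℂ) / ((1 : ℕ) : ℂ)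
        = ((-((k : ℝ) * t) : ℝ) : ℂ) * Complex.I := by push_cast; ring
    rw [h1, h2, Complex.exp_mul_I, Complex.exp_mul_I, ← Complex.ofReal_cos,
      ← Complex.ofReal_sin, ← Complex.ofReal_cos, ← Complex.ofReal_sin,
      Real.cos_neg, Real.sin_neg, Complex.ofReal_neg]
    linear_combination (((Real.sin ((k : ℝ) * t) : ℝ) : ℂ)) * Complex.I_sq
  rw [key]
  exact add_mem (Subalgebra.smul_mem _ (ch_mem 1 _) _) (Subalgebra.smul_mem _ (ch_mem 1 _) _)

lemma trig_mem {T : ℝ → ℝ} (hT : IsRealTrigPoly T) :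
    (fun t : ℝ => ((T t : ℝ) : ℂ)) ∈ Rng 1 := by
  obtain ⟨N, a, b, hrep⟩ := hT
  have key : (fun t : ℝ => ((T t : ℝ) : ℂ))
      = (fun _ : ℝ => ((a 0 : ℝ) : ℂ)) + ∑ k ∈ Finset.Icc 1 N,
          (((a k : ℝ) : ℂ) • (fun t : ℝ => ((Real.cos ((k : ℝ) * t) : ℝ) : ℂ))
            + ((b k : ℝ) : ℂ) • fun t : ℝ => ((Real.sin ((k : ℝ) * t) : ℝ) : ℂ)) := by
    funext t
    simp only [Pi.add_apply, Finset.sum_apply, Pi.smul_apply, smul_eq_mul, hrep t]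
    push_cast
    ring
  rw [key]
  refine add_mem ?_ (Subalgebra.sum_mem _ fun k _ =>
    add_mem (Subalgebra.smul_mem _ (cos_mem k) _) (Subalgebra.smul_mem _ (sin_mem k) _))
  have : (fun _ : ℝ => ((a 0 : ℝ) : ℂ)) = ((a 0 : ℝ) : ℂ) • (1 : ℝ → ℂ) := by
    funext t; simp
  rw [this]
  exact Subalgebra.smul_mem _ (one_mem _) _

/-- Evaluation of bivariate polynomials at `(e^{it}, e^{-it})` as functions of `t`. -/
def theta : MvPolynomial (Fin 2) ℂ →ₐ[ℂ] (ℝ → ℂ) :=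
  MvPolynomial.aeval
    ![fun t : ℝ => Complex.exp (Complex.I * (t : ℂ)),
      fun t : ℝ => Complex.exp (-(Complex.I * (t : ℂ)))]

lemma ch_one_mem_theta (k : ℤ) : ch 1 k ∈ theta.range := by
  rcases le_or_gt 0 k with hk | hk
  · refine ⟨MvPolynomial.X 0 ^ k.toNat, ?_⟩
    show theta (MvPolynomial.X 0 ^ k.toNat) = ch 1 k
    rw [map_pow]
    funext t
    have hX : theta (MvPolynomial.X 0) = fun t : ℝ => Complex.exp (Complex.I * (t : ℂ)) := by
      simp [theta]
    rw [hX]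
    simp only [Pi.pow_apply, ch_apply, ← Complex.exp_nat_mul]
    congr 1
    have hcast : ((k.toNat : ℕ) : ℂ) = (k : ℂ) := by
      exact_mod_cast congrArg (fun n : ℤ => (n : ℂ)) (Int.toNat_of_nonneg hk)
    rw [hcast]
    push_cast
    ring
  · refine ⟨MvPolynomial.X 1 ^ (-k).toNat, ?_⟩
    show theta (MvPolynomial.X 1 ^ (-k).toNat) = ch 1 k
    rw [map_pow]
    funext t
    have hX : theta (MvPolynomial.X 1) = fun t : ℝ => Complex.exp (-(Complex.I * (t : ℂ))) := by
      simp [theta]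
    rw [hX]
    simp only [Pi.pow_apply, ch_apply, ← Complex.exp_nat_mul]
    congr 1
    have hcast : (((-k).toNat : ℕ) : ℂ) = -(k : ℂ) := by
      exact_mod_cast congrArg (fun n : ℤ => (n : ℂ)) (Int.toNat_of_nonneg (by omega))
    rw [hcast]
    push_cast
    ring

lemma Rng_one_le_theta : Rng 1 ≤ theta.range := by
  intro f hf
  obtain ⟨c, rfl⟩ := mem_Rng.mp hf
  rw [Finsupp.sum]
  exact Subalgebra.sum_mem _ fun k _ => Subalgebra.smul_mem _ (ch_one_mem_theta k) _

lemma theta_apply_eval (v : MvPolynomial (Fin 2) ℂ) (t : ℝ) :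
    theta v t = MvPolynomial.eval
      ![Complex.exp (Complex.I * (t : ℂ)), Complex.exp (-(Complex.I * (t : ℂ)))] v := by
  have h1 : theta v t = (Pi.evalAlgHom ℂ (fun _ : ℝ => ℂ) t) (theta v) := rfl
  rw [h1, theta, MvPolynomial.comp_aeval_apply]
  have h2 : (fun i => (Pi.evalAlgHom ℂ (fun _ : ℝ => ℂ) t)
      (![fun t : ℝ => Complex.exp (Complex.I * (t : ℂ)),
         fun t : ℝ => Complex.exp (-(Complex.I * (t : ℂ)))] i))
      = ![Complex.exp (Complex.I * (t : ℂ)), Complex.exp (-(Complex.I * (t : ℂ)))] := by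
    funext i
    fin_cases i <;> rfl
  rw [h2]
  rw [show (MvPolynomial.eval
      ![Complex.exp (Complex.I * (t : ℂ)), Complex.exp (-(Complex.I * (t : ℂ)))] v)
    = (MvPolynomial.aeval
      ![Complex.exp (Complex.I * (t : ℂ)), Complex.exp (-(Complex.I * (t : ℂ)))]) v from
    (RingHom.congr_fun (MvPolynomial.coe_aeval_eq_eval _) v).symm]

lemma prod_shift {M : Type*} [CommMonoid M] (f : ℕ → M) (n : ℕ) (hfn : f n = f 0) :
    ∏ j ∈ Finset.range n, f (j + 1) = ∏ j ∈ Finset.range n, f j := by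
  cases n with
  | zero => simp
  | succ m =>
    rw [Finset.prod_range_succ, hfn]
    exact (Finset.prod_range_succ' f m).symm

end BraidAux


open BraidAux in
/-- The braid product
`∏_C ∏_{j=1}^{s_C} (u − λ(F_C((t+2π(j−1))/s_C) + i G_C((t+2π(j−1))/s_C)))`
is a polynomial in `u`, `exp(it)` and `exp(−it)`, monic of degree `s = ∑_C s_C` in `u`. -/
theorem braid_product_is_polynomial {ι : Type*} [Fintype ι] [Nonempty ι]
    (s : ι → ℕ) (hs : ∀ C, 1 ≤ s C)
    (F G : ι → ℝ → ℝ) (hF : ∀ C, IsRealTrigPoly (F C)) (hG : ∀ C, IsRealTrigPoly (G C))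
    (lam : ℝ) (hlam : 0 < lam) :
    ∃ p : Polynomial (MvPolynomial (Fin 2) ℂ), p.Monic ∧ p.natDegree = ∑ C, s C ∧
      ∀ (u : ℂ) (t : ℝ),
        (∏ C, ∏ j ∈ Finset.range (s C),
          (u - (lam : ℂ) * ((F C ((t + 2 * Real.pi * (j : ℝ)) / (s C : ℝ)) : ℂ)
            + Complex.I * (G C ((t + 2 * Real.pi * (j : ℝ)) / (s C : ℝ)) : ℂ)))) =
        Polynomial.eval₂
          (MvPolynomial.eval ![Complex.exp (Complex.I * (t : ℂ)),
            Complex.exp (-(Complex.I * (t : ℂ)))]) u p := by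
  classical
  -- complexified strand data
  set h : ι → ℝ → ℂ := fun i x => ((F i x : ℝ) : ℂ) + Complex.I * ((G i x : ℝ) : ℂ) with hh_def
  have hhR : ∀ i, h i ∈ Rng 1 := by
    intro i
    have h1 := trig_mem (hF i)
    have h2 := trig_mem (hG i)
    have e : h i = (fun t : ℝ => ((F i t : ℝ) : ℂ))
        + Complex.I • fun t : ℝ => ((G i t : ℝ) : ℂ) := by
      funext t; simp [hh_def, smul_eq_mul]
    rw [e]
    exact add_mem h1 (Subalgebra.smul_mem _ h2 _)
  set r : ι → ℕ → ℝ → ℂ :=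
    fun i j t => (lam : ℂ) * h i ((t + 2 * Real.pi * (j : ℝ)) / (s i : ℝ)) with hr_def
  have hrmem : ∀ i j, r i j ∈ Rng (s i) := by
    intro i j
    have hm := rescale_mem (hhR i) (s i) (hs i) j
    have e : r i j = (lam : ℂ) • fun t : ℝ => h i ((t + 2 * Real.pi * (j : ℝ)) / (s i : ℝ)) := by
      funext t; simp [hr_def, smul_eq_mul]
    rw [e]
    exact Subalgebra.smul_mem _ hm _
  have hr_succ : ∀ i j t, r i j (t + 2 * Real.pi) = r i (j + 1) t := by
    intro i j t
    simp only [hr_def]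
    have e : (t + 2 * Real.pi + 2 * Real.pi * (j : ℝ)) = t + 2 * Real.pi * ((j + 1 : ℕ) : ℝ) := by
      push_cast; ring
    rw [e]
  have hr_cycle : ∀ i, r i (s i) = r i 0 := by
    intro i
    funext t
    have hs0 : (s i : ℝ) ≠ 0 := Nat.cast_ne_zero.mpr (by have := hs i; omega)
    simp only [hr_def]
    congr 1
    have e1 : (t + 2 * Real.pi * ((s i : ℕ) : ℝ)) / (s i : ℝ) = t / (s i : ℝ) + 2 * Real.pi := by
      field_simp
    have e2 : (t + 2 * Real.pi * ((0 : ℕ) : ℝ)) / (s i : ℝ) = t / (s i : ℝ) := by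
      push_cast; ring_nf
    rw [e1, e2]
    exact Rng_one_periodic (hhR i) _
  -- the factor polynomials with function coefficients
  set q : ι → Polynomial (ℝ → ℂ) :=
    fun i => ∏ j ∈ Finset.range (s i), (Polynomial.X - Polynomial.C (r i j)) with hq_def
  have hq_monic : ∀ i, (q i).Monic :=
    fun i => Polynomial.monic_prod_of_monic _ _ fun j _ => Polynomial.monic_X_sub_C _
  have hq_deg : ∀ i, (q i).natDegree = s i := by
    intro i
    rw [hq_def, Polynomial.natDegree_prod_of_monic _ _ fun j _ => Polynomial.monic_X_sub_C _]
    simp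
  -- translation by 2π
  set τ : (ℝ → ℂ) →+* (ℝ → ℂ) :=
    Pi.ringHom (fun t => Pi.evalRingHom (fun _ : ℝ => ℂ) (t + 2 * Real.pi)) with hτ_def
  have hτ_apply : ∀ (f : ℝ → ℂ) (t : ℝ), τ f t = f (t + 2 * Real.pi) := fun f t => rfl
  have hq_inv : ∀ i, (q i).map τ = q i := by
    intro i
    rw [hq_def, Polynomial.map_prod]
    have e : ∀ j, ((Polynomial.X - Polynomial.C (r i j)).map τ)
        = Polynomial.X - Polynomial.C (r i (j + 1)) := by
      intro j
      rw [Polynomial.map_sub, Polynomial.map_X, Polynomial.map_C]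
      have e2 : τ (r i j) = r i (j + 1) := funext fun t => hr_succ i j t
      rw [e2]
    simp only [e]
    refine prod_shift (fun j => Polynomial.X - Polynomial.C (r i j)) (s i) ?_
    show Polynomial.X - Polynomial.C (r i (s i)) = Polynomial.X - Polynomial.C (r i 0)
    rw [hr_cycle i]
  -- coefficients lie in `Rng 1`
  have hcoeff1 : ∀ i n, (q i).coeff n ∈ Rng 1 := by
    intro i n
    refine descend (hs i) ?_ ?_
    · have hlift : q i ∈ Polynomial.lifts ((Rng (s i)).val.toRingHom) := by
        rw [hq_def]
        refine prod_mem fun j _ => ?_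
        rw [sub_eq_add_neg, ← Polynomial.C_neg]
        refine add_mem (Polynomial.X_mem_lifts _) (Polynomial.C'_mem_lifts ?_)
        exact ⟨⟨-(r i j), neg_mem (hrmem i j)⟩, rfl⟩
      obtain ⟨x, hx⟩ := (Polynomial.lifts_iff_coeff_lifts _).mp hlift n
      rw [← hx]
      exact x.2
    · intro t
      calc (q i).coeff n (t + 2 * Real.pi) = τ ((q i).coeff n) t := rfl
        _ = ((q i).map τ).coeff n t := by rw [Polynomial.coeff_map]
        _ = (q i).coeff n t := by rw [hq_inv i]
  -- the full product polynomial
  set Q : Polynomial (ℝ → ℂ) := ∏ i, q i with hQ_def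
  have hQ_monic : Q.Monic := Polynomial.monic_prod_of_monic _ _ fun i _ => hq_monic i
  have hQ_deg : Q.natDegree = ∑ i, s i := by
    rw [hQ_def, Polynomial.natDegree_prod_of_monic _ _ fun i _ => hq_monic i]
    exact Finset.sum_congr rfl fun i _ => hq_deg i
  have hQ_lift : Q ∈ Polynomial.lifts (theta.toRingHom) := by
    rw [hQ_def]
    refine prod_mem fun i _ => ?_
    rw [Polynomial.lifts_iff_coeff_lifts]
    intro n
    obtain ⟨v, hv⟩ := Rng_one_le_theta (hcoeff1 i n)
    exact ⟨v, hv⟩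
  obtain ⟨p, hpmap, hpdeg, hpmonic⟩ := Polynomial.lifts_and_degree_eq_and_monic hQ_lift hQ_monic
  refine ⟨p, hpmonic, ?_, ?_⟩
  · rw [Polynomial.natDegree_eq_of_degree_eq hpdeg, hQ_deg]
  · intro u t
    have key : Polynomial.eval₂ (Pi.evalRingHom (fun _ : ℝ => ℂ) t) u Q
        = Polynomial.eval₂
          (MvPolynomial.eval ![Complex.exp (Complex.I * (t : ℂ)),
            Complex.exp (-(Complex.I * (t : ℂ)))]) u p := by
      rw [← hpmap, Polynomial.eval₂_map]
      congr 1
      refine RingHom.ext fun v => ?_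
      exact theta_apply_eval v t
    rw [← key, hQ_def, Polynomial.eval₂_finset_prod]
    refine Finset.prod_congr rfl fun i _ => ?_
    rw [hq_def, Polynomial.eval₂_finset_prod]
    refine Finset.prod_congr rfl fun j _ => ?_
    rw [Polynomial.eval₂_sub, Polynomial.eval₂_X, Polynomial.eval₂_C]
    rfl
end BraidAux
end

section
/- Let s ≥ 1 be an integer and let Φ : ℝ → ℂ be a complex trigonometric polynomial of degree at most N. For 0 ≤ m ≤ s let e_m(t) denote the m-th elementary symmetric polynomial of the s values Φ(t/s), Φ((t+2π)/s), …, Φ((t+2π(s−1))/s). Then each e_m is a complex trigonometric polynomial in t of degree at most ⌊mN/s⌋; in particular ∏_{j=0}^{s−1} (u − Φ((t+2πj)/s)) = Σ_{m=0}^{s} (−1)^m e_m(t) u^{s−m}, where each coefficient e_m is a trigonometric polynomial of degree at most ⌊mN/s⌋. -/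
open Finset Complex Real


lemma exp_I_injOn : Set.InjOn (fun t : ℝ => Complex.exp (Complex.I * t)) (Set.Ioo 0 1) := by
  intro t1 h1 t2 h2 h
  simp only at h
  rw [Complex.exp_eq_exp_iff_exists_int] at h
  obtain ⟨n, hn⟩ := h
  have hn' : Complex.I * t1 = Complex.I * ((t2 : ℂ) + n * (2 * Real.pi)) := by
    rw [hn]; ring
  have := mul_left_cancel₀ Complex.I_ne_zero hn'
  have hre : (t1 : ℝ) = t2 + n * (2 * Real.pi) := by
    have := congrArg Complex.re this
    push_cast at this
    simpa using this
  have hpi := Real.pi_gt_three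
  obtain ⟨ha1, hb1⟩ := h1
  obtain ⟨ha2, hb2⟩ := h2
  rcases lt_trichotomy n 0 with hn0 | hn0 | hn0
  · have : (n:ℝ) ≤ -1 := by exact_mod_cast (by omega : n ≤ -1)
    nlinarith
  · simp [hn0] at hre; linarith [hre]
  · have : (1:ℝ) ≤ n := by exact_mod_cast (by omega : 1 ≤ n)
    nlinarith

lemma trig_coeff_eq_zero (M : ℕ) (F : ℤ → ℂ)
    (h : ∀ t : ℝ, ∑ K ∈ Icc (-(M:ℤ)) (M:ℤ), F K * Complex.exp (Complex.I * K * t) = 0) :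
    ∀ K ∈ Icc (-(M:ℤ)) (M:ℤ), F K = 0 := by
  set p : Polynomial ℂ := ∑ K ∈ Icc (-(M:ℤ)) (M:ℤ),
    Polynomial.C (F K) * Polynomial.X ^ (K + M).toNat with hp
  have hroot : ∀ t : ℝ, p.IsRoot (Complex.exp (Complex.I * t)) := by
    intro t
    have key : ∀ K ∈ Icc (-(M:ℤ)) (M:ℤ),
        F K * Complex.exp (Complex.I * t) ^ (K + M).toNat
          = Complex.exp (Complex.I * M * t) * (F K * Complex.exp (Complex.I * K * t)) := by
      intro K hK
      simp only [mem_Icc] at hK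
      rw [← Complex.exp_nat_mul]
      have hc : ((K + M).toNat : ℂ) = (K : ℂ) + (M : ℂ) := by
        have : ((K + M).toNat : ℤ) = K + M := by omega
        exact_mod_cast congrArg (Int.cast : ℤ → ℂ) this
      have hee : Complex.exp (((K:ℂ) + M) * (Complex.I * t))
          = Complex.exp (Complex.I * M * t) * Complex.exp (Complex.I * K * t) := by
        rw [← Complex.exp_add]; ring_nf
      rw [hc, hee]; ring
    simp only [Polynomial.IsRoot, hp, Polynomial.eval_finset_sum, Polynomial.eval_mul,
      Polynomial.eval_C, Polynomial.eval_pow, Polynomial.eval_X]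
    rw [Finset.sum_congr rfl key, ← Finset.mul_sum, h t, mul_zero]
  have hp0 : p = 0 := by
    apply Polynomial.eq_zero_of_infinite_isRoot
    refine Set.Infinite.mono ?_ (Set.Infinite.image exp_I_injOn (Set.Ioo_infinite one_pos))
    rintro z ⟨t, _, rfl⟩; exact hroot t
  intro K0 hK0
  have hc : p.coeff (K0 + M).toNat = F K0 := by
    rw [hp, Polynomial.finset_sum_coeff]
    rw [Finset.sum_eq_single K0]
    · simp [Polynomial.coeff_C_mul, Polynomial.coeff_X_pow]
    · intro K hK hne
      simp only [mem_Icc] at hK hK0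
      have : (K + M).toNat ≠ (K0 + M).toNat := by omega
      simp [Polynomial.coeff_C_mul, Polynomial.coeff_X_pow, Ne.symm this]
    · intro h'; exact absurd hK0 h'
  rw [hp0] at hc
  simpa using hc.symm

def TrigRep (M : ℕ) (f : ℝ → ℂ) : Prop :=
  ∃ E : ℤ → ℂ, ∀ t : ℝ, f t = ∑ K ∈ Icc (-(M:ℤ)) (M:ℤ), E K * Complex.exp (Complex.I * K * t)

lemma TrigRep.one : TrigRep 0 (fun _ => 1) := by
  refine ⟨fun K => if K = 0 then 1 else 0, fun t => ?_⟩
  simp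

lemma TrigRep.sum {M : ℕ} {ι : Type*} (A : Finset ι) (f : ι → ℝ → ℂ)
    (h : ∀ i ∈ A, TrigRep M (f i)) : TrigRep M (fun t => ∑ i ∈ A, f i t) := by
  choose E hE using h
  refine ⟨fun K => ∑ i ∈ A.attach, E i i.2 K, fun t => ?_⟩
  show ∑ i ∈ A, f i t = _
  calc ∑ i ∈ A, f i t = ∑ i ∈ A.attach, f i t := (Finset.sum_attach A fun i => f i t).symm
    _ = ∑ i ∈ A.attach, ∑ K ∈ Icc (-(M:ℤ)) (M:ℤ), E i i.2 K * Complex.exp (Complex.I * K * t) :=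
        Finset.sum_congr rfl fun i _ => hE i i.2 t
    _ = ∑ K ∈ Icc (-(M:ℤ)) (M:ℤ), ∑ i ∈ A.attach, E i i.2 K * Complex.exp (Complex.I * K * t) :=
        Finset.sum_comm
    _ = _ := by simp [Finset.sum_mul]

lemma TrigRep.mul {M1 M2 : ℕ} {f g : ℝ → ℂ} (hf : TrigRep M1 f) (hg : TrigRep M2 g) :
    TrigRep (M1 + M2) (fun t => f t * g t) := by
  obtain ⟨E1, h1⟩ := hf
  obtain ⟨E2, h2⟩ := hg
  set E2' : ℤ → ℂ := fun j => if j ∈ Icc (-(M2:ℤ)) (M2:ℤ) then E2 j else 0 with hE2'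
  refine ⟨fun K => ∑ K1 ∈ Icc (-(M1:ℤ)) (M1:ℤ), E1 K1 * E2' (K - K1), fun t => ?_⟩
  simp only [Nat.cast_add, Finset.sum_mul]
  rw [Finset.sum_comm]
  rw [h1 t, h2 t, Finset.sum_mul]
  refine Finset.sum_congr rfl fun K1 hK1 => ?_
  simp only [mem_Icc] at hK1
  rw [Finset.mul_sum]
  have hsub : Icc (K1 + -(M2:ℤ)) (K1 + (M2:ℤ)) ⊆ Icc (-((M1:ℤ) + M2)) ((M1:ℤ) + M2) := by
    intro K hK
    simp only [mem_Icc] at hK ⊢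
    push_cast
    omega
  rw [← Finset.sum_subset hsub (by
    intro K hK hK'
    have h0 : E2' (K - K1) = 0 := by
      rw [hE2']
      simp only [mem_Icc] at hK hK' ⊢
      rw [if_neg]
      push_cast at hK hK' ⊢
      omega
    simp [h0])]
  rw [← Finset.map_add_left_Icc, Finset.sum_map]
  refine Finset.sum_congr rfl fun K2 hK2 => ?_
  simp only [addLeftEmbedding_apply]
  have h1' : E2' (K1 + K2 - K1) = E2 K2 := by
    rw [hE2']
    simp only [add_sub_cancel_left, if_pos hK2]
  rw [h1']
  have : Complex.exp (Complex.I * ((K1:ℤ) + K2 : ℤ) * t)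
      = Complex.exp (Complex.I * K1 * t) * Complex.exp (Complex.I * K2 * t) := by
    rw [← Complex.exp_add]
    push_cast
    ring_nf
  rw [this]
  ring

lemma TrigRep.prod {N : ℕ} {ι : Type*} [DecidableEq ι] (A : Finset ι) (f : ι → ℝ → ℂ)
    (h : ∀ i ∈ A, TrigRep N (f i)) : TrigRep (A.card * N) (fun t => ∏ i ∈ A, f i t) := by
  induction A using Finset.induction_on with
  | empty => simpa using TrigRep.one
  | @insert a A' hnotmem ih =>
    have := (h a (mem_insert_self a A')).mul (ih fun i hi => h i (mem_insert_of_mem hi))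
    rw [Finset.card_insert_of_notMem hnotmem]
    have heq : (fun t => ∏ i ∈ insert a A', f i t)
        = fun t => f a t * ∏ i ∈ A', f i t := by
      funext t; rw [Finset.prod_insert hnotmem]
    rw [heq, show (A'.card + 1) * N = N + A'.card * N by ring]
    exact this

lemma vieta (s : ℕ) (a : ℕ → ℂ) (u : ℂ) :
    ∏ j ∈ Finset.range s, (u - a j) =
      ∑ m ∈ Finset.range (s + 1),
        (-1 : ℂ) ^ m * (∑ A ∈ Finset.powersetCard m (Finset.range s), ∏ j ∈ A, a j)
          * u ^ (s - m) := by
  have h1 : ∀ j ∈ Finset.range s, u - a j = (-a j) + u := fun j _ => by ring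
  rw [Finset.prod_congr rfl h1, Finset.prod_add]
  rw [Finset.sum_powerset (Finset.range s) (fun A => (∏ j ∈ A, -a j) * ∏ j ∈ Finset.range s \ A, u)]
  rw [Finset.card_range]
  refine Finset.sum_congr rfl fun m hm => ?_
  rw [Finset.mul_sum, Finset.sum_mul]
  refine Finset.sum_congr rfl fun A hA => ?_
  simp only [Finset.mem_powersetCard] at hA
  obtain ⟨hAs, hAc⟩ := hA
  have hneg : ∏ j ∈ A, (-a j) = (-1:ℂ)^A.card * ∏ j ∈ A, a j := by
    rw [← Finset.prod_const (-1 : ℂ), ← Finset.prod_mul_distrib]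
    simp
  have hcard : (Finset.range s \ A).card = s - m := by
    rw [Finset.card_sdiff_of_subset hAs, Finset.card_range, hAc]
  rw [hneg, hAc, Finset.prod_const, hcard]

lemma periodic_em (s : ℕ) (hs : 1 ≤ s) (Φ : ℝ → ℂ) (hper : ∀ t : ℝ, Φ (t + 2 * Real.pi) = Φ t)
    (m : ℕ) (t : ℝ) :
    ∑ A ∈ Finset.powersetCard m (Finset.range s),
        ∏ j ∈ A, Φ ((t + 2 * Real.pi + 2 * Real.pi * (j : ℝ)) / (s : ℝ)) =
    ∑ A ∈ Finset.powersetCard m (Finset.range s),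
        ∏ j ∈ A, Φ ((t + 2 * Real.pi * (j : ℝ)) / (s : ℝ)) := by
  classical
  have hs0 : (s : ℝ) ≠ 0 := by positivity
  set f : ℕ → ℕ := fun j => if j + 1 = s then 0 else j + 1 with hf
  set g : ℕ → ℕ := fun j => if j = 0 then s - 1 else j - 1 with hg
  have hgf : ∀ j < s, g (f j) = j := by
    intro j hj
    by_cases h : j + 1 = s
    · simp only [hf, hg, if_pos h, if_pos rfl]; omega
    · simp only [hf, hg, if_neg h]
      rw [if_neg (by omega)]
      omega
  have hfg : ∀ j < s, f (g j) = j := by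
    intro j hj
    by_cases h : j = 0
    · subst h
      simp only [hg, if_pos rfl, hf]
      rw [if_pos (by omega)]
    · simp only [hg, if_neg h, hf]
      rw [if_neg (by omega)]
      omega
  have hflt : ∀ j < s, f j < s := by
    intro j hj; simp only [hf]; split_ifs <;> omega
  have hglt : ∀ j < s, g j < s := by
    intro j hj; simp only [hg]; split_ifs <;> omega
  have hkey : ∀ j < s, Φ ((t + 2 * Real.pi + 2 * Real.pi * (j : ℝ)) / (s : ℝ))
      = Φ ((t + 2 * Real.pi * (f j : ℝ)) / (s : ℝ)) := by
    intro j hj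
    simp only [hf]
    split_ifs with h
    · have harg : (t + 2 * Real.pi + 2 * Real.pi * (j : ℝ)) / (s : ℝ)
          = (t + 2 * Real.pi * ((0:ℕ) : ℝ)) / (s : ℝ) + 2 * Real.pi := by
        have hj' : (j : ℝ) = (s : ℝ) - 1 := by
          have : ((j:ℕ) : ℝ) + 1 = s := by exact_mod_cast congrArg (Nat.cast : ℕ → ℝ) h
          linarith
        field_simp [hj']
        linear_combination 2 * Real.pi * hj'
      rw [harg, hper]
    · have harg : (t + 2 * Real.pi + 2 * Real.pi * (j : ℝ)) / (s : ℝ)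
          = (t + 2 * Real.pi * ((j + 1 : ℕ) : ℝ)) / (s : ℝ) := by
        push_cast; ring_nf
      rw [harg]
  refine Finset.sum_nbij' (fun A => A.image f) (fun A => A.image g) ?_ ?_ ?_ ?_ ?_
  · intro A hA
    simp only [Finset.mem_powersetCard, Finset.mem_range] at hA ⊢
    obtain ⟨hAs, hAc⟩ := hA
    constructor
    · intro x hx
      simp only [Finset.mem_image] at hx
      obtain ⟨j, hj, rfl⟩ := hx
      exact Finset.mem_range.mpr (hflt j (Finset.mem_range.mp (hAs hj)))
    · rw [Finset.card_image_of_injOn, hAc]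
      intro a ha b hb hab
      have ha' := Finset.mem_range.mp (hAs ha)
      have hb' := Finset.mem_range.mp (hAs hb)
      rw [← hgf a ha', ← hgf b hb', hab]
  · intro A hA
    simp only [Finset.mem_powersetCard, Finset.mem_range] at hA ⊢
    obtain ⟨hAs, hAc⟩ := hA
    constructor
    · intro x hx
      simp only [Finset.mem_image] at hx
      obtain ⟨j, hj, rfl⟩ := hx
      exact Finset.mem_range.mpr (hglt j (Finset.mem_range.mp (hAs hj)))
    · rw [Finset.card_image_of_injOn, hAc]
      intro a ha b hb hab
      have ha' := Finset.mem_range.mp (hAs ha)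
      have hb' := Finset.mem_range.mp (hAs hb)
      rw [← hfg a ha', ← hfg b hb', hab]
  · intro A hA
    simp only [Finset.mem_powersetCard] at hA
    show (A.image f).image g = A
    rw [Finset.image_image]
    rw [Finset.image_congr (g := id), Finset.image_id]
    intro j hj
    exact hgf j (Finset.mem_range.mp (hA.1 hj))
  · intro A hA
    simp only [Finset.mem_powersetCard] at hA
    show (A.image g).image f = A
    rw [Finset.image_image]
    rw [Finset.image_congr (g := id), Finset.image_id]
    intro j hj
    exact hfg j (Finset.mem_range.mp (hA.1 hj))
  · intro A hA
    simp only [Finset.mem_powersetCard] at hA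
    rw [Finset.prod_image]
    · exact Finset.prod_congr rfl fun j hj => hkey j (Finset.mem_range.mp (hA.1 hj))
    · intro a ha b hb hab
      have ha' := Finset.mem_range.mp (hA.1 ha)
      have hb' := Finset.mem_range.mp (hA.1 hb)
      rw [← hgf a ha', ← hgf b hb', hab]

/-- Let `Φ` be a complex trigonometric polynomial of degree at most `N`
and let `e_m(t)` be the `m`-th elementary symmetric polynomial of the `s` values
`Φ((t+2πj)/s)`, `j = 0, …, s−1`. Then each `e_m` is a complex trigonometric polynomial
of degree at most `⌊mN/s⌋`, and
`∏_{j=0}^{s−1} (u − Φ((t+2πj)/s)) = ∑_{m=0}^{s} (−1)^m e_m(t) u^{s−m}`. -/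
theorem esymm_of_shifted_trigPoly (s : ℕ) (hs : 1 ≤ s) (N : ℕ) (Φ : ℝ → ℂ) (c : ℤ → ℂ)
    (hΦ : ∀ t : ℝ, Φ t = ∑ k ∈ Finset.Icc (-(N : ℤ)) (N : ℤ),
      c k * Complex.exp (Complex.I * (k : ℂ) * (t : ℂ)))
    (e : ℕ → ℝ → ℂ)
    (he : ∀ (m : ℕ) (t : ℝ), e m t =
      ∑ A ∈ Finset.powersetCard m (Finset.range s),
        ∏ j ∈ A, Φ ((t + 2 * Real.pi * (j : ℝ)) / (s : ℝ))) :
    (∀ m ≤ s, ∃ d : ℤ → ℂ, ∀ t : ℝ, e m t =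
      ∑ k ∈ Finset.Icc (-(((m * N) / s : ℕ) : ℤ)) (((m * N) / s : ℕ) : ℤ),
        d k * Complex.exp (Complex.I * (k : ℂ) * (t : ℂ))) ∧
    (∀ (u : ℂ) (t : ℝ),
      ∏ j ∈ Finset.range s, (u - Φ ((t + 2 * Real.pi * (j : ℝ)) / (s : ℝ))) =
      ∑ m ∈ Finset.range (s + 1), (-1 : ℂ) ^ m * e m t * u ^ (s - m)) := by
  classical
  have hs0R : (s : ℝ) ≠ 0 := by positivity
  have hs0C : (s : ℂ) ≠ 0 := by exact_mod_cast (Nat.cast_ne_zero (R := ℂ)).mpr (by omega)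
  -- periodicity of Φ
  have hper : ∀ t : ℝ, Φ (t + 2 * Real.pi) = Φ t := by
    intro t
    rw [hΦ (t + 2 * Real.pi), hΦ t]
    refine Finset.sum_congr rfl fun k _ => ?_
    have : Complex.I * k * ((t + 2 * Real.pi : ℝ) : ℂ)
        = Complex.I * k * (t : ℂ) + k * (2 * Real.pi * Complex.I) := by
      push_cast; ring
    rw [this, Complex.exp_add, Complex.exp_int_mul]
    rw [show ((2:ℂ) * Real.pi * Complex.I) = 2 * Real.pi * Complex.I from rfl]
    rw [Complex.exp_two_pi_mul_I]
    simp
  constructor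
  · -- part (a)
    intro m hm
    -- the function G in the variable τ = t/s
    set G : ℝ → ℂ := fun τ => ∑ A ∈ Finset.powersetCard m (Finset.range s),
      ∏ j ∈ A, Φ (τ + 2 * Real.pi * (j : ℝ) / (s : ℝ)) with hG
    have heG : ∀ t : ℝ, e m t = G (t / s) := by
      intro t
      rw [he m t, hG]
      refine Finset.sum_congr rfl fun A _ => Finset.prod_congr rfl fun j _ => ?_
      rw [add_div]
    have hrep : TrigRep (m * N) G := by
      rw [hG]
      refine TrigRep.sum _ _ fun A hA => ?_
      simp only [Finset.mem_powersetCard] at hA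
      have := TrigRep.prod (N := N) A (fun j τ => Φ (τ + 2 * Real.pi * (j : ℝ) / (s : ℝ)))
        (fun j _ => ?_)
      · rwa [hA.2] at this
      · refine ⟨fun k => c k * Complex.exp (Complex.I * k * ((2 * Real.pi * (j : ℝ) / (s : ℝ) : ℝ) : ℂ)),
          fun τ => ?_⟩
        show Φ (τ + 2 * Real.pi * (j : ℝ) / (s : ℝ)) = _
        rw [hΦ (τ + 2 * Real.pi * (j : ℝ) / (s : ℝ))]
        refine Finset.sum_congr rfl fun k _ => ?_
        rw [mul_assoc (c k), ← Complex.exp_add]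
        congr 1
        push_cast
        ring
    obtain ⟨E, hE⟩ := hrep
    -- periodicity of G with period 2π/s
    have hGper : ∀ τ : ℝ, G (τ + 2 * Real.pi / s) = G τ := by
      intro τ
      have h1 : G (τ + 2 * Real.pi / s) = e m (s * τ + 2 * Real.pi) := by
        rw [heG (s * τ + 2 * Real.pi)]
        congr 1
        field_simp
        try ring
      have h2 : G τ = e m (s * τ) := by
        rw [heG (s * τ)]
        congr 1
        field_simp
        try ring
      rw [h1, h2, he m (s * τ + 2 * Real.pi), he m (s * τ)]
      exact periodic_em s hs Φ hper m (s * τ)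
    -- coefficients at non-multiples of s vanish
    have hvanish : ∀ K ∈ Finset.Icc (-((m*N : ℕ):ℤ)) ((m*N : ℕ):ℤ),
        E K * (Complex.exp (Complex.I * K * ((2 * Real.pi / s : ℝ) : ℂ)) - 1) = 0 := by
      apply trig_coeff_eq_zero
      intro τ
      have h1 := hE (τ + 2 * Real.pi / s)
      rw [hGper τ, hE τ] at h1
      have h2 : ∀ K ∈ Finset.Icc (-((m*N : ℕ):ℤ)) ((m*N : ℕ):ℤ),
          E K * Complex.exp (Complex.I * K * ((τ + 2 * Real.pi / s : ℝ) : ℂ))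
          = E K * (Complex.exp (Complex.I * K * ((2 * Real.pi / s : ℝ) : ℂ)))
            * Complex.exp (Complex.I * K * (τ : ℂ)) := by
        intro K _
        rw [mul_assoc (E K), ← Complex.exp_add]
        congr 2
        push_cast
        ring
      rw [Finset.sum_congr rfl h2] at h1
      calc ∑ K ∈ Finset.Icc (-((m*N : ℕ):ℤ)) ((m*N : ℕ):ℤ),
            E K * (Complex.exp (Complex.I * K * ((2 * Real.pi / s : ℝ) : ℂ)) - 1)
              * Complex.exp (Complex.I * K * (τ : ℂ))
          = (∑ K ∈ Finset.Icc (-((m*N : ℕ):ℤ)) ((m*N : ℕ):ℤ),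
              E K * Complex.exp (Complex.I * K * ((2 * Real.pi / s : ℝ) : ℂ))
                * Complex.exp (Complex.I * K * (τ : ℂ)))
            - ∑ K ∈ Finset.Icc (-((m*N : ℕ):ℤ)) ((m*N : ℕ):ℤ),
              E K * Complex.exp (Complex.I * K * (τ : ℂ)) := by
            rw [← Finset.sum_sub_distrib]
            exact Finset.sum_congr rfl fun K _ => by ring
        _ = 0 := by rw [← h1]; ring
    have hEzero : ∀ K ∈ Finset.Icc (-((m*N : ℕ):ℤ)) ((m*N : ℕ):ℤ), ¬ ((s:ℤ) ∣ K) → E K = 0 := by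
      intro K hK hdvd
      have h0 := hvanish K hK
      rcases mul_eq_zero.mp h0 with h | h
      · exact h
      · exfalso
        apply hdvd
        have h1 : Complex.exp (Complex.I * K * ((2 * Real.pi / s : ℝ) : ℂ)) = 1 := by
          have := sub_eq_zero.mp h
          exact this
        rw [Complex.exp_eq_one_iff] at h1
        obtain ⟨n, hn⟩ := h1
        have h2 : (K : ℂ) * (2 * Real.pi * Complex.I) = (n * s : ℤ) * (2 * Real.pi * Complex.I) := by
          push_cast at hn ⊢
          field_simp at hn
          push_cast at hn
          linear_combination (2 * (Real.pi:ℂ) * Complex.I) * hn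
        have hne : (2 * (Real.pi:ℂ) * Complex.I) ≠ 0 := by
          simp [Real.pi_ne_zero, Complex.I_ne_zero]
        have h3 : (K : ℂ) = ((n * s : ℤ) : ℂ) := by
          have := mul_right_cancel₀ hne h2
          exact_mod_cast this
        have h4 : K = n * s := by exact_mod_cast h3
        exact ⟨n, by rw [h4]; ring⟩
    -- now conclude
    set L : ℕ := (m * N) / s with hL
    refine ⟨fun k => E ((s:ℤ) * k), fun t => ?_⟩
    rw [heG t, hE (t / s)]
    have hJsub : (Finset.Icc (-(L:ℤ)) (L:ℤ)).image (fun k => (s:ℤ) * k)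
        ⊆ Finset.Icc (-((m*N : ℕ):ℤ)) ((m*N : ℕ):ℤ) := by
      intro K hK
      simp only [Finset.mem_image, Finset.mem_Icc] at hK ⊢
      obtain ⟨k, ⟨hk1, hk2⟩, rfl⟩ := hK
      have hsL : (s:ℤ) * L ≤ ((m*N : ℕ):ℤ) := by
        have h := Nat.div_mul_le_self (m * N) s
        have h2 : s * L ≤ m * N := by rw [hL, mul_comm]; exact h
        exact_mod_cast h2
      constructor
      · nlinarith [Int.natCast_pos.mpr (by omega : 0 < s)]
      · nlinarith [Int.natCast_pos.mpr (by omega : 0 < s)]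
    rw [← Finset.sum_subset hJsub (by
      intro K hK hK'
      refine mul_eq_zero_of_left (hEzero K hK ?_) _
      intro ⟨k, hk⟩
      apply hK'
      simp only [Finset.mem_image, Finset.mem_Icc]
      refine ⟨k, ⟨?_, ?_⟩, hk.symm⟩
      · simp only [Finset.mem_Icc] at hK
        have hs1 : (0:ℤ) < s := by exact_mod_cast (by omega : 0 < s)
        have : -((m*N:ℕ):ℤ) ≤ s * k := by rw [← hk]; exact hK.1
        have h5 : (-k) ≤ ((m*N:ℕ):ℤ) / s := by
          rw [Int.le_ediv_iff_mul_le hs1]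
          nlinarith
        have h6 : ((m*N:ℕ):ℤ) / s = (L:ℤ) := by
          rw [hL]; exact_mod_cast (Int.natCast_ediv (m*N) s).symm
        omega
      · simp only [Finset.mem_Icc] at hK
        have hs1 : (0:ℤ) < s := by exact_mod_cast (by omega : 0 < s)
        have : s * k ≤ ((m*N:ℕ):ℤ) := by rw [← hk]; exact hK.2
        have h5 : k ≤ ((m*N:ℕ):ℤ) / s := by
          rw [Int.le_ediv_iff_mul_le hs1]
          nlinarith
        have h6 : ((m*N:ℕ):ℤ) / s = (L:ℤ) := by
          rw [hL]; exact_mod_cast (Int.natCast_ediv (m*N) s).symm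
        omega)]
    rw [Finset.sum_image (by
      intro a _ b _ hab
      have : (s:ℤ) ≠ 0 := by exact_mod_cast (by omega : s ≠ 0)
      exact mul_left_cancel₀ this hab)]
    refine Finset.sum_congr rfl fun k _ => ?_
    have harg : Complex.I * (((s:ℤ) * k : ℤ) : ℂ) * ((t / s : ℝ) : ℂ)
        = Complex.I * (k:ℂ) * (t:ℂ) := by
      push_cast
      field_simp
    rw [harg]
  · -- part (b)
    intro u t
    rw [vieta s (fun j => Φ ((t + 2 * Real.pi * (j : ℝ)) / (s : ℝ))) u]
    exact Finset.sum_congr rfl fun m _ => by rw [he m t]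
end

section
/- Let I be a finite nonempty index set; for each C ∈ I let s_C ≥ 1 be an integer and let F_C, G_C, H_C : ℝ → ℝ and R_C : ℝ → ℝ be real trigonometric polynomials with R_C(τ) > 0 for all τ. For C ∈ I, 1 ≤ j ≤ s_C, and τ_j := (t + 2π(j−1))/s_C, set P_{C,j}(x,y,z,t) = (x − F_C(τ_j))² + (y − G_C(τ_j))² − R_C(τ_j)² + i·(z − H_C(τ_j)). Then there exists a polynomial p ∈ ℂ[X, Y, Z, V, W] such that for all x, y, z, t ∈ ℝ: ∏_{C∈I} ∏_{j=1}^{s_C} P_{C,j}(x, y, z, t) = p(x, y, z, exp(i t), exp(−i t)). -/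
open Finset Complex Real

noncomputable section
/-- exponential helper: `exp(I k t / s)` -/
def EE (k : ℤ) (s : ℕ) (t : ℝ) : ℂ := Complex.exp (Complex.I * k * t / s)

lemma EE_mul (k l : ℤ) (s : ℕ) (t : ℝ) : EE k s t * EE l s t = EE (k + l) s t := by
  rw [EE, EE, EE, ← Complex.exp_add]
  congr 1
  push_cast
  ring

lemma EE_pow (k : ℤ) (s : ℕ) (t : ℝ) (m : ℕ) : EE k s t ^ m = EE (k * m) s t := by
  rw [EE, EE, ← Complex.exp_nat_mul]
  congr 1; push_cast; ring

lemma EE_zero (s : ℕ) (t : ℝ) : EE 0 s t = 1 := by simp [EE]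

def RepF (s : ℕ) (f : ℝ → ℝ → ℝ → ℝ → ℂ) : Prop :=
  ∃ (n : ℕ) (q : Polynomial (MvPolynomial (Fin 3) ℂ)),
    ∀ x y z t : ℝ, f x y z t =
      EE (-(n : ℤ)) s t *
        Polynomial.eval₂ (MvPolynomial.eval ![(x : ℂ), (y : ℂ), (z : ℂ)]) (EE 1 s t) q

lemma RepF.congr {s : ℕ} {f g : ℝ → ℝ → ℝ → ℝ → ℂ} (h : RepF s f) (hfg : ∀ x y z t, f x y z t = g x y z t) : RepF s g := by
  obtain ⟨n, q, hq⟩ := h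
  exact ⟨n, q, fun x y z t => (hfg x y z t) ▸ hq x y z t⟩

lemma RepF.mul {s : ℕ} {f g : ℝ → ℝ → ℝ → ℝ → ℂ} (hf : RepF s f) (hg : RepF s g) :
    RepF s (fun x y z t => f x y z t * g x y z t) := by
  obtain ⟨n, q, hq⟩ := hf
  obtain ⟨m, r, hr⟩ := hg
  refine ⟨n + m, q * r, fun x y z t => ?_⟩
  simp only []
  rw [hq, hr, Polynomial.eval₂_mul]
  rw [show (-(↑(n+m):ℤ)) = (-(n:ℤ)) + (-(m:ℤ)) by push_cast; ring, ← EE_mul]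
  ring

lemma EE_cancel (n m : ℕ) (s : ℕ) (t : ℝ) :
    EE (-((n + m : ℕ) : ℤ)) s t * EE 1 s t ^ m = EE (-(n : ℤ)) s t := by
  rw [EE_pow, EE_mul]
  congr 1
  push_cast
  ring

lemma RepF.add {s : ℕ} {f g : ℝ → ℝ → ℝ → ℝ → ℂ} (hf : RepF s f) (hg : RepF s g) :
    RepF s (fun x y z t => f x y z t + g x y z t) := by
  obtain ⟨n, q, hq⟩ := hf
  obtain ⟨m, r, hr⟩ := hg
  refine ⟨n + m, Polynomial.X ^ m * q + Polynomial.X ^ n * r, fun x y z t => ?_⟩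
  simp only []
  rw [hq, hr, Polynomial.eval₂_add, Polynomial.eval₂_mul, Polynomial.eval₂_mul,
    Polynomial.eval₂_X_pow, Polynomial.eval₂_X_pow, mul_add, ← mul_assoc, ← mul_assoc,
    EE_cancel n m s t, show n + m = m + n by ring, EE_cancel m n s t]

lemma RepF.const {s : ℕ} (c : ℂ) : RepF s (fun _ _ _ _ => c) := by
  refine ⟨0, Polynomial.C (MvPolynomial.C c), fun x y z t => ?_⟩
  simp [EE_zero]

lemma RepF.var (i : Fin 3) {s : ℕ} :
    RepF s (fun x y z _ => ![(x : ℂ), (y : ℂ), (z : ℂ)] i) := by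
  refine ⟨0, Polynomial.C (MvPolynomial.X i), fun x y z t => ?_⟩
  simp [EE_zero]

lemma RepF.cexp {s : ℕ} (k : ℤ) (c : ℂ) : RepF s (fun _ _ _ t => c * EE k s t) := by
  refine ⟨(-k).toNat, Polynomial.C (MvPolynomial.C c) * Polynomial.X ^ k.toNat,
    fun x y z t => ?_⟩
  rw [Polynomial.eval₂_mul, Polynomial.eval₂_C, Polynomial.eval₂_X_pow]
  rw [EE_pow, MvPolynomial.eval_C, one_mul]
  have key : EE (-(((-k).toNat : ℕ) : ℤ)) s t * EE ((k.toNat : ℕ) : ℤ) s t = EE k s t := by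
    rw [EE_mul]; congr 1; omega
  show c * EE k s t = _
  rw [← key]; ring

lemma RepF.sum {α : Type*} {s : ℕ} (S : Finset α) (f : α → ℝ → ℝ → ℝ → ℝ → ℂ)
    (h : ∀ a ∈ S, RepF s (f a)) :
    RepF s (fun x y z t => ∑ a ∈ S, f a x y z t) := by
  classical
  induction S using Finset.induction_on with
  | empty => exact (RepF.const 0).congr (by simp)
  | insert a S' ha ih =>
    exact ((h a (by simp)).add (ih (fun b hb => h b (by simp [hb])))).congr
      (by intro x y z t; rw [Finset.sum_insert ha])

lemma RepF.prod {α : Type*} {s : ℕ} (S : Finset α) (f : α → ℝ → ℝ → ℝ → ℝ → ℂ)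
    (h : ∀ a ∈ S, RepF s (f a)) :
    RepF s (fun x y z t => ∏ a ∈ S, f a x y z t) := by
  classical
  induction S using Finset.induction_on with
  | empty => exact (RepF.const 1).congr (by simp)
  | insert a S' ha ih =>
    exact ((h a (by simp)).mul (ih (fun b hb => h b (by simp [hb])))).congr
      (by intro x y z t; rw [Finset.prod_insert ha])

lemma cos_decomp (k s j : ℕ) : ∃ c1 c2 : ℂ, ∀ t : ℝ,
    ((Real.cos ((k : ℝ) * ((t + 2 * Real.pi * j) / s)) : ℝ) : ℂ)
      = c1 * EE (k : ℤ) s t + c2 * EE (-(k : ℤ)) s t := by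
  refine ⟨Complex.exp (Complex.I * (k : ℂ) * (2 * (Real.pi : ℂ) * j) / s) / 2,
    Complex.exp (-(Complex.I * (k : ℂ) * (2 * (Real.pi : ℂ) * j) / s)) / 2, fun t => ?_⟩
  rw [Complex.ofReal_cos]
  simp only [Complex.cos, EE]
  have E1 : Complex.exp ((((k : ℝ) * ((t + 2 * Real.pi * j) / s) : ℝ) : ℂ) * Complex.I)
      = Complex.exp (Complex.I * (k : ℂ) * (2 * (Real.pi : ℂ) * j) / s)
        * Complex.exp (Complex.I * (((k : ℤ) : ℂ)) * (t : ℂ) / s) := by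
    rw [← Complex.exp_add]; congr 1; push_cast; ring
  have E2 : Complex.exp (-(((k : ℝ) * ((t + 2 * Real.pi * j) / s) : ℝ) : ℂ) * Complex.I)
      = Complex.exp (-(Complex.I * (k : ℂ) * (2 * (Real.pi : ℂ) * j) / s))
        * Complex.exp (Complex.I * (((-(k : ℤ)) : ℤ) : ℂ) * (t : ℂ) / s) := by
    rw [← Complex.exp_add]; congr 1; push_cast; ring
  rw [E1, E2]
  ring

lemma sin_decomp (k s j : ℕ) : ∃ c1 c2 : ℂ, ∀ t : ℝ,
    ((Real.sin ((k : ℝ) * ((t + 2 * Real.pi * j) / s)) : ℝ) : ℂ)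
      = c1 * EE (k : ℤ) s t + c2 * EE (-(k : ℤ)) s t := by
  refine ⟨-(Complex.exp (Complex.I * (k : ℂ) * (2 * (Real.pi : ℂ) * j) / s) * Complex.I) / 2,
    Complex.exp (-(Complex.I * (k : ℂ) * (2 * (Real.pi : ℂ) * j) / s)) * Complex.I / 2,
    fun t => ?_⟩
  rw [Complex.ofReal_sin]
  simp only [Complex.sin, EE]
  have E1 : Complex.exp ((((k : ℝ) * ((t + 2 * Real.pi * j) / s) : ℝ) : ℂ) * Complex.I)
      = Complex.exp (Complex.I * (k : ℂ) * (2 * (Real.pi : ℂ) * j) / s)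
        * Complex.exp (Complex.I * (((k : ℤ) : ℂ)) * (t : ℂ) / s) := by
    rw [← Complex.exp_add]; congr 1; push_cast; ring
  have E2 : Complex.exp (-(((k : ℝ) * ((t + 2 * Real.pi * j) / s) : ℝ) : ℂ) * Complex.I)
      = Complex.exp (-(Complex.I * (k : ℂ) * (2 * (Real.pi : ℂ) * j) / s))
        * Complex.exp (Complex.I * (((-(k : ℤ)) : ℤ) : ℂ) * (t : ℂ) / s) := by
    rw [← Complex.exp_add]; congr 1; push_cast; ring
  rw [E1, E2]
  ring

lemma RepF.trig {s : ℕ} {T : ℝ → ℝ} (hT : IsRealTrigPoly T) (j : ℕ) :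
    RepF s (fun _ _ _ t => ((T ((t + 2 * Real.pi * j) / s) : ℝ) : ℂ)) := by
  obtain ⟨N, a, b, hab⟩ := hT
  have base : RepF s (fun _ _ _ t => ((a 0 : ℝ) : ℂ)
      + ∑ k ∈ Finset.Icc 1 N,
        (((a k : ℝ) : ℂ) * ((Real.cos ((k : ℝ) * ((t + 2 * Real.pi * j) / s)) : ℝ) : ℂ)
         + ((b k : ℝ) : ℂ) * ((Real.sin ((k : ℝ) * ((t + 2 * Real.pi * j) / s)) : ℝ) : ℂ))) := by
    refine (RepF.const ((a 0 : ℝ) : ℂ)).add (RepF.sum _ _ (fun k _ => ?_))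
    obtain ⟨c1, c2, hc⟩ := cos_decomp k s j
    obtain ⟨d1, d2, hd⟩ := sin_decomp k s j
    refine RepF.add (RepF.mul (RepF.const _) ?_) (RepF.mul (RepF.const _) ?_)
    · exact (((RepF.cexp (k : ℤ) c1).add (RepF.cexp (-(k : ℤ)) c2)).congr
        (fun x y z t => (hc t).symm))
    · exact (((RepF.cexp ((k : ℤ)) d1).add (RepF.cexp (-(k : ℤ)) d2)).congr
        (fun x y z t => (hd t).symm))
  refine base.congr (fun x y z t => ?_)
  rw [hab ((t + 2 * Real.pi * j) / s)]
  push_cast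
  ring

lemma RepF.sub {s : ℕ} {f g : ℝ → ℝ → ℝ → ℝ → ℂ} (hf : RepF s f) (hg : RepF s g) :
    RepF s (fun x y z t => f x y z t - g x y z t) :=
  (hf.add ((RepF.const (-1)).mul hg)).congr (fun x y z t => by ring)

lemma RepF.xvar {s : ℕ} : RepF s (fun x _ _ _ => (x : ℂ)) :=
  (RepF.var 0).congr (fun x y z t => by simp)

lemma RepF.yvar {s : ℕ} : RepF s (fun _ y _ _ => (y : ℂ)) :=
  (RepF.var 1).congr (fun x y z t => by simp)

lemma RepF.zvar {s : ℕ} : RepF s (fun _ _ z _ => (z : ℂ)) :=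
  (RepF.var 2).congr (fun x y z t => by simp)

lemma RepF.factor {s j : ℕ} {F G H R : ℝ → ℝ} (hF : IsRealTrigPoly F)
    (hG : IsRealTrigPoly G) (hH : IsRealTrigPoly H) (hR : IsRealTrigPoly R) :
    RepF s (fun x y z t =>
      ((((x - F ((t + 2 * Real.pi * j) / s)) ^ 2
        + (y - G ((t + 2 * Real.pi * j) / s)) ^ 2
        - (R ((t + 2 * Real.pi * j) / s)) ^ 2 : ℝ) : ℂ)
        + Complex.I * ((z - H ((t + 2 * Real.pi * j) / s) : ℝ) : ℂ))) := by
  have hFc := RepF.trig hF j (s := s)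
  have hGc := RepF.trig hG j (s := s)
  have hHc := RepF.trig hH j (s := s)
  have hRc := RepF.trig hR j (s := s)
  have big := ((((RepF.xvar.sub hFc).mul (RepF.xvar.sub hFc)).add
      ((RepF.yvar.sub hGc).mul (RepF.yvar.sub hGc))).sub (hRc.mul hRc)).add
      ((RepF.const Complex.I).mul (RepF.zvar.sub hHc))
  refine big.congr (fun x y z t => ?_)
  push_cast
  ring

lemma trig_periodic {T : ℝ → ℝ} (hT : IsRealTrigPoly T) (τ : ℝ) :
    T (τ + 2 * Real.pi) = T τ := by
  obtain ⟨N, a, b, h⟩ := hT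
  rw [h, h]
  congr 1
  refine Finset.sum_congr rfl (fun k _ => ?_)
  rw [show (k : ℝ) * (τ + 2 * Real.pi) = (k : ℝ) * τ + (k : ℕ) * (2 * Real.pi) by push_cast; ring,
    Real.cos_add_nat_mul_two_pi, Real.sin_add_nat_mul_two_pi]

set_option maxHeartbeats 1000000 in
lemma prod_shift_periodic {s : ℕ} (hs : 1 ≤ s) (Φ : ℝ → ℂ)
    (hΦ : ∀ τ, Φ (τ + 2 * Real.pi) = Φ τ) (t : ℝ) :
    ∏ j ∈ Finset.range s, Φ ((t + 2 * Real.pi + 2 * Real.pi * j) / s)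
      = ∏ j ∈ Finset.range s, Φ ((t + 2 * Real.pi * j) / s) := by
  obtain ⟨n, rfl⟩ : ∃ n, s = n + 1 := ⟨s - 1, by omega⟩
  have hs0 : ((n : ℝ) + 1) ≠ 0 := by positivity
  have key : ∀ j : ℕ, Φ ((t + 2 * Real.pi + 2 * Real.pi * j) / (n + 1))
      = Φ ((t + 2 * Real.pi * (j + 1 : ℕ)) / (n + 1)) := by
    intro j; congr 1; push_cast; ring
  calc ∏ j ∈ Finset.range (n + 1), Φ ((t + 2 * Real.pi + 2 * Real.pi * j) / (n + 1 : ℕ))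
      = ∏ j ∈ Finset.range (n + 1), Φ ((t + 2 * Real.pi * ((j + 1 : ℕ) : ℝ)) / (n + 1 : ℕ)) := by
        refine Finset.prod_congr rfl (fun j _ => ?_); congr 1; push_cast; ring
    _ = (∏ j ∈ Finset.range n, Φ ((t + 2 * Real.pi * ((j + 1 : ℕ) : ℝ)) / (n + 1 : ℕ)))
          * Φ ((t + 2 * Real.pi * ((n + 1 : ℕ) : ℝ)) / (n + 1 : ℕ)) := by
        rw [Finset.prod_range_succ]
    _ = (∏ j ∈ Finset.range n, Φ ((t + 2 * Real.pi * ((j + 1 : ℕ) : ℝ)) / (n + 1 : ℕ)))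
          * Φ ((t + 2 * Real.pi * ((0 : ℕ) : ℝ)) / (n + 1 : ℕ)) := by
        congr 1
        rw [show (t + 2 * Real.pi * ((n + 1 : ℕ) : ℝ)) / (n + 1 : ℕ)
            = (t + 2 * Real.pi * ((0 : ℕ) : ℝ)) / (n + 1 : ℕ) + 2 * Real.pi by
          push_cast; field_simp; ring]
        exact hΦ _
    _ = ∏ j ∈ Finset.range (n + 1), Φ ((t + 2 * Real.pi * j) / (n + 1 : ℕ)) :=
        (Finset.prod_range_succ' (fun j => Φ ((t + 2 * Real.pi * (j : ℝ)) / ((n + 1 : ℕ) : ℝ))) n).symm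

lemma EE_shift (k : ℤ) (s l : ℕ) (t : ℝ) :
    EE k s (t + 2 * Real.pi * l)
      = EE k s t * Complex.exp (2 * (Real.pi : ℂ) * Complex.I * k / s) ^ l := by
  rw [EE, EE, ← Complex.exp_nat_mul, ← Complex.exp_add]
  congr 1
  push_cast
  ring

lemma geom_root (s : ℕ) (hs : 1 ≤ s) (k : ℤ) :
    ∑ l ∈ Finset.range s, Complex.exp (2 * (Real.pi : ℂ) * Complex.I * k / s) ^ l
      = if (s : ℤ) ∣ k then (s : ℂ) else 0 := by
  have hsC : ((s : ℂ)) ≠ 0 := Nat.cast_ne_zero.2 (by omega)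
  by_cases h : (s : ℤ) ∣ k
  · obtain ⟨c, rfl⟩ := h
    have hw : Complex.exp (2 * (Real.pi : ℂ) * Complex.I * (((s : ℤ) * c : ℤ) : ℂ) / s) = 1 := by
      rw [show (2 * (Real.pi : ℂ) * Complex.I * (((s : ℤ) * c : ℤ) : ℂ) / s)
          = (c : ℂ) * (2 * (Real.pi : ℂ) * Complex.I) by push_cast; field_simp]
      exact Complex.exp_int_mul_two_pi_mul_I c
    rw [if_pos ⟨c, rfl⟩, hw]
    simp
  · rw [if_neg h]
    have h2π : (2 * (Real.pi : ℂ) * Complex.I) ≠ 0 :=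
      mul_ne_zero (mul_ne_zero two_ne_zero (Complex.ofReal_ne_zero.2 Real.pi_ne_zero))
        Complex.I_ne_zero
    have hw1 : Complex.exp (2 * (Real.pi : ℂ) * Complex.I * k / s) ≠ 1 := by
      intro hw
      rw [Complex.exp_eq_one_iff] at hw
      obtain ⟨m, hm⟩ := hw
      apply h
      refine ⟨m, ?_⟩
      have hm' : (k : ℂ) = (s : ℂ) * m := by
        apply mul_left_cancel₀ h2π
        field_simp at hm
        linear_combination (2 * (Real.pi : ℂ) * Complex.I) * hm
      exact_mod_cast hm'
    have hws : Complex.exp (2 * (Real.pi : ℂ) * Complex.I * k / s) ^ s = 1 := by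
      rw [← Complex.exp_nat_mul,
        show (s : ℂ) * (2 * (Real.pi : ℂ) * Complex.I * k / s)
          = (k : ℂ) * (2 * (Real.pi : ℂ) * Complex.I) by field_simp]
      exact Complex.exp_int_mul_two_pi_mul_I k
    rw [geom_sum_eq hw1, hws, sub_self, zero_div]

lemma pow_exp_eq (s : ℕ) (hs : 1 ≤ s) (k : ℤ) (hdvd : (s : ℤ) ∣ k) (t : ℝ) :
    Complex.exp (Complex.I * t) ^ ((k / (s : ℤ)).toNat)
      * Complex.exp (-(Complex.I * t)) ^ (((-k) / (s : ℤ)).toNat) = EE k s t := by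
  obtain ⟨e, rfl⟩ := hdvd
  have hs0 : (s : ℤ) ≠ 0 := by omega
  have hsC : ((s : ℂ)) ≠ 0 := Nat.cast_ne_zero.2 (by omega)
  rw [Int.mul_ediv_cancel_left _ hs0, show (-((s : ℤ) * e)) = (s : ℤ) * (-e) by ring,
    Int.mul_ediv_cancel_left _ hs0, ← Complex.exp_nat_mul, ← Complex.exp_nat_mul,
    ← Complex.exp_add, EE]
  congr 1
  have key : ((e.toNat : ℕ) : ℂ) - (((-e).toNat : ℕ) : ℂ) = (e : ℂ) := by
    have h1 : ((e.toNat : ℤ) - ((-e).toNat : ℤ) : ℤ) = e := by omega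
    have := congrArg (Int.cast : ℤ → ℂ) h1
    push_cast at this
    exact_mod_cast this
  push_cast
  field_simp
  linear_combination (t : ℂ) * key

set_option maxHeartbeats 1000000 in
lemma RepF.toPoly {s : ℕ} (hs : 1 ≤ s) {f : ℝ → ℝ → ℝ → ℝ → ℂ} (hf : RepF s f)
    (hper : ∀ x y z t, f x y z (t + 2 * Real.pi) = f x y z t) :
    ∃ p : MvPolynomial (Fin 5) ℂ, ∀ x y z t : ℝ,
      f x y z t = MvPolynomial.eval
        ![(x : ℂ), (y : ℂ), (z : ℂ), Complex.exp (Complex.I * (t : ℂ)),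
          Complex.exp (-(Complex.I * (t : ℂ)))] p := by
  obtain ⟨n, q, hq⟩ := hf
  have hsC : ((s : ℂ)) ≠ 0 := Nat.cast_ne_zero.2 (by omega)
  set D := q.natDegree with hD
  refine ⟨∑ m ∈ Finset.range (D + 1),
    if (s : ℤ) ∣ ((m : ℤ) - (n : ℤ)) then
      (MvPolynomial.rename (Fin.castLE (by norm_num : (3 : ℕ) ≤ 5)) (q.coeff m))
        * (MvPolynomial.X 3) ^ (((((m : ℤ) - (n : ℤ))) / (s : ℤ)).toNat)
        * (MvPolynomial.X 4) ^ ((((-((m : ℤ) - (n : ℤ)))) / (s : ℤ)).toNat)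
    else 0, fun x y z t => ?_⟩
  set φ : MvPolynomial (Fin 3) ℂ →+* ℂ :=
    (MvPolynomial.eval ![(x : ℂ), (y : ℂ), (z : ℂ)]) with hφ
  have hper' : ∀ l : ℕ, f x y z (t + 2 * Real.pi * l) = f x y z t := by
    intro l
    induction l with
    | zero => norm_num
    | succ l ih =>
      rw [show t + 2 * Real.pi * ((l : ℕ) + 1 : ℕ)
          = (t + 2 * Real.pi * l) + 2 * Real.pi by push_cast; ring, hper, ih]
  have expand : ∀ l : ℕ, f x y z (t + 2 * Real.pi * l)
      = ∑ m ∈ Finset.range (D + 1), φ (q.coeff m) * EE ((m : ℤ) - n) s t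
          * Complex.exp (2 * (Real.pi : ℂ) * Complex.I * ((((m : ℤ) - (n : ℤ) : ℤ)) : ℂ) / s) ^ l := by
    intro l
    rw [hq, Polynomial.eval₂_eq_sum_range, Finset.mul_sum]
    refine Finset.sum_congr rfl (fun m _ => ?_)
    have e1 : EE 1 s (t + 2 * Real.pi * l) ^ m = EE ((m : ℤ)) s (t + 2 * Real.pi * l) := by
      rw [EE_pow]; norm_num
    have e2 : EE (-(n : ℤ)) s (t + 2 * Real.pi * l) * EE ((m : ℤ)) s (t + 2 * Real.pi * l)
        = EE ((m : ℤ) - n) s (t + 2 * Real.pi * l) := by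
      rw [EE_mul]; congr 1; ring
    have e3 := EE_shift ((m : ℤ) - n) s l t
    calc EE (-(n : ℤ)) s (t + 2 * Real.pi * l)
          * (φ (q.coeff m) * EE 1 s (t + 2 * Real.pi * l) ^ m)
        = φ (q.coeff m) * (EE (-(n : ℤ)) s (t + 2 * Real.pi * l)
            * EE ((m : ℤ)) s (t + 2 * Real.pi * l)) := by rw [e1]; ring
      _ = φ (q.coeff m) * EE ((m : ℤ) - n) s (t + 2 * Real.pi * l) := by rw [e2]
      _ = φ (q.coeff m) * EE ((m : ℤ) - n) s t
            * Complex.exp (2 * (Real.pi : ℂ) * Complex.I * ((((m : ℤ) - (n : ℤ) : ℤ)) : ℂ) / s) ^ l := by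
          rw [e3]; ring
  have sumf : (s : ℂ) * f x y z t = ∑ m ∈ Finset.range (D + 1),
      (if (s : ℤ) ∣ ((m : ℤ) - (n : ℤ)) then
        (s : ℂ) * (φ (q.coeff m) * EE ((m : ℤ) - n) s t) else 0) := by
    calc (s : ℂ) * f x y z t = ∑ l ∈ Finset.range s, f x y z (t + 2 * Real.pi * l) := by
          rw [Finset.sum_congr rfl (fun l _ => hper' l), Finset.sum_const, Finset.card_range,
            nsmul_eq_mul]
      _ = ∑ l ∈ Finset.range s, ∑ m ∈ Finset.range (D + 1),
            φ (q.coeff m) * EE ((m : ℤ) - n) s t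
              * Complex.exp (2 * (Real.pi : ℂ) * Complex.I * ((((m : ℤ) - (n : ℤ) : ℤ)) : ℂ) / s) ^ l :=
          Finset.sum_congr rfl (fun l _ => expand l)
      _ = ∑ m ∈ Finset.range (D + 1), ∑ l ∈ Finset.range s,
            φ (q.coeff m) * EE ((m : ℤ) - n) s t
              * Complex.exp (2 * (Real.pi : ℂ) * Complex.I * ((((m : ℤ) - (n : ℤ) : ℤ)) : ℂ) / s) ^ l :=
          Finset.sum_comm
      _ = ∑ m ∈ Finset.range (D + 1),
            φ (q.coeff m) * EE ((m : ℤ) - n) s t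
              * (if (s : ℤ) ∣ ((m : ℤ) - (n : ℤ)) then (s : ℂ) else 0) := by
          refine Finset.sum_congr rfl (fun m _ => ?_)
          rw [← Finset.mul_sum, geom_root s hs]
      _ = ∑ m ∈ Finset.range (D + 1),
            (if (s : ℤ) ∣ ((m : ℤ) - (n : ℤ)) then
              (s : ℂ) * (φ (q.coeff m) * EE ((m : ℤ) - n) s t) else 0) := by
          refine Finset.sum_congr rfl (fun m _ => ?_)
          split <;> ring
  have hcomp : (![(x : ℂ), (y : ℂ), (z : ℂ), Complex.exp (Complex.I * (t : ℂ)),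
      Complex.exp (-(Complex.I * (t : ℂ)))] ∘ (Fin.castLE (by norm_num : (3 : ℕ) ≤ 5)))
      = ![(x : ℂ), (y : ℂ), (z : ℂ)] := by
    funext i
    fin_cases i <;> rfl
  have evalp : (s : ℂ) * MvPolynomial.eval
      ![(x : ℂ), (y : ℂ), (z : ℂ), Complex.exp (Complex.I * (t : ℂ)),
        Complex.exp (-(Complex.I * (t : ℂ)))]
      (∑ m ∈ Finset.range (D + 1),
        if (s : ℤ) ∣ ((m : ℤ) - (n : ℤ)) then
          (MvPolynomial.rename (Fin.castLE (by norm_num : (3 : ℕ) ≤ 5)) (q.coeff m))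
            * (MvPolynomial.X 3) ^ (((((m : ℤ) - (n : ℤ))) / (s : ℤ)).toNat)
            * (MvPolynomial.X 4) ^ ((((-((m : ℤ) - (n : ℤ)))) / (s : ℤ)).toNat)
        else 0)
      = ∑ m ∈ Finset.range (D + 1),
        (if (s : ℤ) ∣ ((m : ℤ) - (n : ℤ)) then
          (s : ℂ) * (φ (q.coeff m) * EE ((m : ℤ) - n) s t) else 0) := by
    rw [map_sum, Finset.mul_sum]
    refine Finset.sum_congr rfl (fun m _ => ?_)
    split
    · rename_i hdvd
      rw [map_mul, map_mul, map_pow, map_pow, MvPolynomial.eval_rename, hcomp,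
        MvPolynomial.eval_X, MvPolynomial.eval_X]
      have := pow_exp_eq s hs ((m : ℤ) - n) hdvd t
      rw [show (![(x : ℂ), (y : ℂ), (z : ℂ), Complex.exp (Complex.I * (t : ℂ)),
          Complex.exp (-(Complex.I * (t : ℂ)))] 3) = Complex.exp (Complex.I * (t : ℂ)) by rfl,
        show (![(x : ℂ), (y : ℂ), (z : ℂ), Complex.exp (Complex.I * (t : ℂ)),
          Complex.exp (-(Complex.I * (t : ℂ)))] 4) = Complex.exp (-(Complex.I * (t : ℂ))) by rfl]
      rw [mul_assoc, this]
    · simp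

  exact mul_left_cancel₀ hsC (sumf.trans evalp.symm)
end

/-- Lemma 3.1 of the paper. The loop braid product
`∏_C ∏_{j=1}^{s_C} P_{C,j}(x,y,z,t)`, with
`P_{C,j} = (x − F_C(τ_j))² + (y − G_C(τ_j))² − R_C(τ_j)² + i(z − H_C(τ_j))` and
`τ_j = (t+2π(j−1))/s_C`, is a polynomial in `x`, `y`, `z`, `exp(it)` and `exp(−it)`. -/
theorem loop_braid_product_is_polynomial {ι : Type*} [Fintype ι] [Nonempty ι]
    (s : ι → ℕ) (hs : ∀ C, 1 ≤ s C)
    (F G H R : ι → ℝ → ℝ)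
    (hF : ∀ C, IsRealTrigPoly (F C)) (hG : ∀ C, IsRealTrigPoly (G C))
    (hH : ∀ C, IsRealTrigPoly (H C)) (hR : ∀ C, IsRealTrigPoly (R C))
    (hRpos : ∀ C τ, 0 < R C τ) :
    ∃ p : MvPolynomial (Fin 5) ℂ,
      ∀ (x y z t : ℝ),
        (∏ C, ∏ j ∈ Finset.range (s C),
          ((((x - F C ((t + 2 * Real.pi * (j : ℝ)) / (s C : ℝ))) ^ 2
            + (y - G C ((t + 2 * Real.pi * (j : ℝ)) / (s C : ℝ))) ^ 2
            - (R C ((t + 2 * Real.pi * (j : ℝ)) / (s C : ℝ))) ^ 2 : ℝ) : ℂ)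
            + Complex.I * ((z - H C ((t + 2 * Real.pi * (j : ℝ)) / (s C : ℝ)) : ℝ) : ℂ))) =
        MvPolynomial.eval
          ![(x : ℂ), (y : ℂ), (z : ℂ), Complex.exp (Complex.I * (t : ℂ)),
            Complex.exp (-(Complex.I * (t : ℂ)))] p := by
  have key : ∀ C : ι, ∃ p : MvPolynomial (Fin 5) ℂ, ∀ x y z t : ℝ,
      (∏ j ∈ Finset.range (s C),
          ((((x - F C ((t + 2 * Real.pi * (j : ℝ)) / (s C : ℝ))) ^ 2
            + (y - G C ((t + 2 * Real.pi * (j : ℝ)) / (s C : ℝ))) ^ 2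
            - (R C ((t + 2 * Real.pi * (j : ℝ)) / (s C : ℝ))) ^ 2 : ℝ) : ℂ)
            + Complex.I * ((z - H C ((t + 2 * Real.pi * (j : ℝ)) / (s C : ℝ)) : ℝ) : ℂ))) =
        MvPolynomial.eval
          ![(x : ℂ), (y : ℂ), (z : ℂ), Complex.exp (Complex.I * (t : ℂ)),
            Complex.exp (-(Complex.I * (t : ℂ)))] p := by
    intro C
    have hrep : RepF (s C) (fun x y z t => ∏ j ∈ Finset.range (s C),
        ((((x - F C ((t + 2 * Real.pi * (j : ℝ)) / (s C : ℝ))) ^ 2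
          + (y - G C ((t + 2 * Real.pi * (j : ℝ)) / (s C : ℝ))) ^ 2
          - (R C ((t + 2 * Real.pi * (j : ℝ)) / (s C : ℝ))) ^ 2 : ℝ) : ℂ)
          + Complex.I * ((z - H C ((t + 2 * Real.pi * (j : ℝ)) / (s C : ℝ)) : ℝ) : ℂ))) :=
      RepF.prod _ _ (fun j _ => RepF.factor (hF C) (hG C) (hH C) (hR C))
    have hper : ∀ x y z t : ℝ, (fun x y z t => ∏ j ∈ Finset.range (s C),
        ((((x - F C ((t + 2 * Real.pi * (j : ℝ)) / (s C : ℝ))) ^ 2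
          + (y - G C ((t + 2 * Real.pi * (j : ℝ)) / (s C : ℝ))) ^ 2
          - (R C ((t + 2 * Real.pi * (j : ℝ)) / (s C : ℝ))) ^ 2 : ℝ) : ℂ)
          + Complex.I * ((z - H C ((t + 2 * Real.pi * (j : ℝ)) / (s C : ℝ)) : ℝ) : ℂ)))
          x y z (t + 2 * Real.pi)
        = (fun x y z t => ∏ j ∈ Finset.range (s C),
        ((((x - F C ((t + 2 * Real.pi * (j : ℝ)) / (s C : ℝ))) ^ 2
          + (y - G C ((t + 2 * Real.pi * (j : ℝ)) / (s C : ℝ))) ^ 2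
          - (R C ((t + 2 * Real.pi * (j : ℝ)) / (s C : ℝ))) ^ 2 : ℝ) : ℂ)
          + Complex.I * ((z - H C ((t + 2 * Real.pi * (j : ℝ)) / (s C : ℝ)) : ℝ) : ℂ)))
          x y z t := by
      intro x y z t
      exact prod_shift_periodic (hs C)
        (fun τ => (((x - F C τ) ^ 2 + (y - G C τ) ^ 2 - (R C τ) ^ 2 : ℝ) : ℂ)
          + Complex.I * ((z - H C τ : ℝ) : ℂ))
        (fun τ => by
          show (((x - F C (τ + 2 * Real.pi)) ^ 2 + (y - G C (τ + 2 * Real.pi)) ^ 2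
              - (R C (τ + 2 * Real.pi)) ^ 2 : ℝ) : ℂ)
              + Complex.I * ((z - H C (τ + 2 * Real.pi) : ℝ) : ℂ) = _
          rw [trig_periodic (hF C), trig_periodic (hG C), trig_periodic (hH C),
            trig_periodic (hR C)]) t
    obtain ⟨p, hp⟩ := hrep.toPoly (hs C) hper
    exact ⟨p, fun x y z t => hp x y z t⟩
  choose p hp using key
  refine ⟨∏ C, p C, fun x y z t => ?_⟩
  rw [map_prod]
  exact Finset.prod_congr rfl (fun C _ => hp C x y z t)
end

section
/- Let I be a finite nonempty index set; for each C ∈ I let s_C ≥ 1 be an integer and let F_C, G_C, H_C : ℝ → ℝ and R_C : ℝ → ℝ be real trigonometric polynomials with R_C(τ) > 0 for all τ. For C ∈ I, 1 ≤ j ≤ s_C, and τ_j := (t + 2π(j−1))/s_C, set P_{C,j}(x,y,z,t) = (x − F_C(τ_j))² + (y − G_C(τ_j))² − R_C(τ_j)² + i·(z − H_C(τ_j)). Then there exist a natural number m and a polynomial q ∈ ℂ[X, Y, Z, V] such that for all x, y, z, t ∈ ℝ: exp(i m t) · ∏_{C∈I} ∏_{j=1}^{s_C} P_{C,j}(x,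 y, z, t) = q(x, y, z, exp(i t)). In other words, the product equals exp(−i m t) times a polynomial that is holomorphic in the single complex variable v = exp(i t). -/
open Finset Complex Real

noncomputable section LBAux

abbrev LBR3 := MvPolynomial (Fin 3) ℂ

def lbEv (x y z : ℝ) : LBR3 →+* ℂ := MvPolynomial.eval ![(x:ℂ),(y:ℂ),(z:ℂ)]

def LBSem (E : ℝ → ℝ → ℝ → ℝ → ℂ) : Prop :=
  ∃ (n : ℕ) (p : Polynomial LBR3), ∀ x y z τ : ℝ,
    Complex.exp (Complex.I * (τ:ℂ)) ^ n * E x y z τ =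
      Polynomial.eval₂ (lbEv x y z) (Complex.exp (Complex.I * (τ:ℂ))) p

lemma lbsem_congr {E1 E2 : ℝ → ℝ → ℝ → ℝ → ℂ}
    (h : ∀ x y z τ, E1 x y z τ = E2 x y z τ) (hE : LBSem E1) : LBSem E2 := by
  obtain ⟨n, p, hp⟩ := hE
  exact ⟨n, p, fun x y z τ => by rw [← h]; exact hp x y z τ⟩

lemma lbsem_const (c : ℂ) : LBSem (fun _ _ _ _ => c) :=
  ⟨0, Polynomial.C (MvPolynomial.C c), fun x y z τ => by
    simp [lbEv]⟩

lemma lbsem_x : LBSem (fun x _ _ _ => (x:ℂ)) :=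
  ⟨0, Polynomial.C (MvPolynomial.X 0), fun x y z τ => by simp [lbEv]⟩

lemma lbsem_y : LBSem (fun _ y _ _ => (y:ℂ)) :=
  ⟨0, Polynomial.C (MvPolynomial.X 1), fun x y z τ => by simp [lbEv]⟩

lemma lbsem_z : LBSem (fun _ _ z _ => (z:ℂ)) :=
  ⟨0, Polynomial.C (MvPolynomial.X 2), fun x y z τ => by simp [lbEv]⟩

lemma lbsem_add {E1 E2} (h1 : LBSem E1) (h2 : LBSem E2) :
    LBSem (fun x y z τ => E1 x y z τ + E2 x y z τ) := by
  obtain ⟨n1, p1, hp1⟩ := h1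
  obtain ⟨n2, p2, hp2⟩ := h2
  refine ⟨n1 + n2, Polynomial.X ^ n2 * p1 + Polynomial.X ^ n1 * p2, fun x y z τ => ?_⟩
  simp only [Polynomial.eval₂_add, Polynomial.eval₂_mul, Polynomial.eval₂_X_pow]
  rw [← hp1 x y z τ, ← hp2 x y z τ, pow_add]
  ring

lemma lbsem_mul {E1 E2} (h1 : LBSem E1) (h2 : LBSem E2) :
    LBSem (fun x y z τ => E1 x y z τ * E2 x y z τ) := by
  obtain ⟨n1, p1, hp1⟩ := h1
  obtain ⟨n2, p2, hp2⟩ := h2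
  refine ⟨n1 + n2, p1 * p2, fun x y z τ => ?_⟩
  rw [Polynomial.eval₂_mul, ← hp1 x y z τ, ← hp2 x y z τ, pow_add]
  ring

lemma lbsem_neg {E} (h : LBSem E) : LBSem (fun x y z τ => -(E x y z τ)) := by
  obtain ⟨n, p, hp⟩ := h
  refine ⟨n, -p, fun x y z τ => ?_⟩
  rw [Polynomial.eval₂_neg, ← hp x y z τ]
  ring

lemma lbsem_sub {E1 E2} (h1 : LBSem E1) (h2 : LBSem E2) :
    LBSem (fun x y z τ => E1 x y z τ - E2 x y z τ) := by
  have := lbsem_add h1 (lbsem_neg h2)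
  exact lbsem_congr (fun x y z τ => by ring) this

lemma lbsem_trig {T : ℝ → ℝ} (hT : IsRealTrigPoly T) :
    LBSem (fun _ _ _ τ => ((T τ : ℝ) : ℂ)) := by
  obtain ⟨N, a, b, hT⟩ := hT
  refine ⟨N, Polynomial.C (MvPolynomial.C ((a 0 : ℝ) : ℂ)) * Polynomial.X ^ N
    + ∑ k ∈ Finset.Icc 1 N,
      (Polynomial.C (MvPolynomial.C (((a k : ℝ) : ℂ)/2)) *
          (Polynomial.X ^ (N+k) + Polynomial.X ^ (N-k))
        + Polynomial.C (MvPolynomial.C (((b k : ℝ) : ℂ)/(2*Complex.I))) *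
          (Polynomial.X ^ (N+k) - Polynomial.X ^ (N-k))), fun x y z τ => ?_⟩
  show Complex.exp (Complex.I * (τ:ℂ)) ^ N * ((T τ : ℝ) : ℂ) = _
  rw [hT τ]
  set w : ℂ := Complex.exp (Complex.I * (τ:ℂ)) with hw
  simp only [Polynomial.eval₂_add, Polynomial.eval₂_sub, Polynomial.eval₂_mul,
    Polynomial.eval₂_X_pow, Polynomial.eval₂_C, Polynomial.eval₂_finset_sum, lbEv,
    MvPolynomial.eval_C]
  push_cast
  rw [mul_add, Finset.mul_sum]
  congr 1
  · ring
  refine Finset.sum_congr rfl fun k hk => ?_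
  have hkN : k ≤ N := (Finset.mem_Icc.mp hk).2
  set θ : ℂ := (((k : ℝ) * τ : ℝ) : ℂ) with hθ
  have h1 : w ^ k = Complex.exp (θ * Complex.I) := by
    rw [hw, ← Complex.exp_nat_mul]; congr 1; push_cast [θ]; ring
  have h1' : w ^ k = Complex.cos θ + Complex.sin θ * Complex.I := by
    rw [h1, Complex.exp_mul_I]
  have h2 : w ^ (N - k) * w ^ k = w ^ N := by
    rw [← pow_add, Nat.sub_add_cancel hkN]
  have hk1 : Complex.exp (θ * Complex.I) * Complex.exp ((-θ) * Complex.I) = 1 := by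
    rw [← Complex.exp_add]; simp
  have h3 : w ^ (N - k) = w ^ N * (Complex.cos θ - Complex.sin θ * Complex.I) := by
    have : w ^ (N - k) = (w ^ (N - k) * w ^ k) * Complex.exp ((-θ) * Complex.I) := by
      rw [mul_assoc, h1, hk1, mul_one]
    rw [this, h2, Complex.exp_mul_I, Complex.cos_neg, Complex.sin_neg]; ring
  have hθ' : ((k:ℂ) * (τ:ℂ)) = θ := by rw [hθ]; push_cast; ring
  rw [pow_add, h1', h3, hθ']
  field_simp
  ring
lemma lb_coeff_comp_C_mul_X {Rc : Type*} [CommSemiring Rc] (p : Polynomial Rc) (c : Rc) (k : ℕ) :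
    (p.comp (Polynomial.C c * Polynomial.X)).coeff k = c ^ k * p.coeff k := by
  induction p using Polynomial.induction_on' with
  | add f g hf hg => simp [Polynomial.add_comp, hf, hg, mul_add]
  | monomial d a =>
    rw [Polynomial.monomial_comp, mul_pow, ← Polynomial.C_pow, ← mul_assoc, ← Polynomial.C_mul,
      Polynomial.coeff_C_mul, Polynomial.coeff_X_pow, Polynomial.coeff_monomial]
    by_cases h : k = d
    · simp [h]; ring
    · rw [if_neg (show ¬ d = k from fun hh => h hh.symm)]; simp [h]

lemma lbsem_prod {s : ℕ} (hs : 1 ≤ s) {E : ℝ → ℝ → ℝ → ℝ → ℂ} (hE : LBSem E) :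
    ∃ (n : ℕ) (q : Polynomial LBR3), ∀ x y z t : ℝ,
      Complex.exp (Complex.I * (t:ℂ)) ^ n *
          ∏ j ∈ Finset.range s, E x y z ((t + 2 * Real.pi * (j:ℝ)) / (s:ℝ)) =
        Polynomial.eval₂ (lbEv x y z) (Complex.exp (Complex.I * (t:ℂ))) q := by
  obtain ⟨n, p, hp⟩ := hE
  have hs0 : (s:ℕ) ≠ 0 := by omega
  set ζ : ℂ := Complex.exp (2 * (Real.pi:ℂ) * Complex.I / (s:ℂ)) with hζdef
  have hζ : IsPrimitiveRoot ζ s := Complex.isPrimitiveRoot_exp s hs0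
  set ζ' : LBR3 := MvPolynomial.C ζ with hζ'
  set tw : ℕ → Polynomial LBR3 :=
    fun j => p.comp (Polynomial.C ζ' ^ j * Polynomial.X) with htw
  set Q : Polynomial LBR3 := ∏ j ∈ Finset.range s, tw j with hQ
  have hζs : ζ ^ s = 1 := hζ.pow_eq_one
  have htw0 : tw 0 = p := by simp [htw]
  have hζ's : ζ' ^ s = 1 := by rw [hζ', ← map_pow, hζs, map_one]
  have htws : tw s = tw 0 := by
    simp [htw, ← map_pow, hζ's]
  have hshift : ∀ j, (tw j).comp (Polynomial.C ζ' * Polynomial.X) = tw (j + 1) := by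
    intro j
    simp only [htw]
    rw [Polynomial.comp_assoc]
    congr 1
    rw [Polynomial.mul_comp, Polynomial.pow_comp, Polynomial.C_comp, Polynomial.X_comp]
    ring
  have hQinv : Q.comp (Polynomial.C ζ' * Polynomial.X) = Q := by
    rw [hQ, Polynomial.prod_comp, Finset.prod_congr rfl fun j _ => hshift j]
    by_cases hp0 : p = 0
    · have hz : ∀ j, tw j = 0 := fun j => by simp [htw, hp0]
      rw [Finset.prod_eq_zero (Finset.mem_range.mpr (by omega : 0 < s)) (hz 1),
        Finset.prod_eq_zero (Finset.mem_range.mpr (by omega : 0 < s)) (hz 0)]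
    · have h0 : tw 0 ≠ 0 := by rwa [htw0]
      apply mul_right_cancel₀ h0
      rw [← Finset.prod_range_succ']
      rw [Finset.prod_range_succ, htws, htw0]
  have hcoeff : ∀ k, ¬ (s ∣ k) → Q.coeff k = 0 := by
    intro k hk
    have h1 : ζ' ^ k * Q.coeff k = Q.coeff k := by
      conv_rhs => rw [← hQinv]
      rw [lb_coeff_comp_C_mul_X]
    have hζk : ζ ^ k ≠ 1 := fun h => hk ((hζ.pow_eq_one_iff_dvd k).mp h)
    have hne : ζ' ^ k ≠ 1 := by
      rw [hζ', ← map_pow, ← MvPolynomial.C_1]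
      exact fun h => hζk (MvPolynomial.C_injective _ _ h)
    have h2 : (ζ' ^ k - 1) * Q.coeff k = 0 := by linear_combination h1
    rcases mul_eq_zero.mp h2 with h | h
    · exact absurd (sub_eq_zero.mp h) hne
    · exact h
  have hexp : Polynomial.expand LBR3 s (Q.contract s) = Q := by
    refine Polynomial.ext fun k => ?_
    rw [Polynomial.coeff_expand (by omega : 0 < s), Polynomial.coeff_contract hs0]
    split_ifs with h
    · rw [Nat.div_mul_cancel h]
    · exact (hcoeff k h).symm
  set c : ℂ := (ζ ^ (∑ j ∈ Finset.range s, j)) ^ n with hc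
  have hcne : c ≠ 0 := pow_ne_zero _ (pow_ne_zero _ (Complex.exp_ne_zero _))
  refine ⟨n, Polynomial.C (MvPolynomial.C c⁻¹) * Q.contract s, fun x y z t => ?_⟩
  have hsR : ((s:ℝ)) ≠ 0 := Nat.cast_ne_zero.mpr hs0
  have hsC : ((s:ℂ)) ≠ 0 := Nat.cast_ne_zero.mpr hs0
  set w : ℂ := Complex.exp (Complex.I * ((t:ℂ) / (s:ℂ))) with hw
  have hws : w ^ s = Complex.exp (Complex.I * (t:ℂ)) := by
    rw [hw, ← Complex.exp_nat_mul]
    congr 1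
    field_simp
  have hwj : ∀ j : ℕ,
      Complex.exp (Complex.I * (((t + 2 * Real.pi * (j:ℝ)) / (s:ℝ) : ℝ) : ℂ)) = w * ζ ^ j := by
    intro j
    rw [hw, hζdef, ← Complex.exp_nat_mul, ← Complex.exp_add]
    congr 1
    push_cast
    field_simp
  have key : ∀ j : ℕ, (w * ζ ^ j) ^ n * E x y z ((t + 2 * Real.pi * (j:ℝ)) / (s:ℝ)) =
      Polynomial.eval₂ (lbEv x y z) w (tw j) := by
    intro j
    have h := hp x y z ((t + 2 * Real.pi * (j:ℝ)) / (s:ℝ))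
    rw [hwj j] at h
    rw [h, htw, Polynomial.eval₂_comp]
    congr 1
    rw [Polynomial.eval₂_mul, Polynomial.eval₂_pow, Polynomial.eval₂_C, Polynomial.eval₂_X]
    simp [lbEv, hζ']
    ring
  have hprodexp : ∏ j ∈ Finset.range s, (w * ζ ^ j) ^ n =
      Complex.exp (Complex.I * (t:ℂ)) ^ n * c := by
    rw [Finset.prod_pow, Finset.prod_mul_distrib, Finset.prod_const, Finset.card_range,
      Finset.prod_pow_eq_pow_sum, hws, mul_pow]
  have hQeval : Polynomial.eval₂ (lbEv x y z) w Q =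
      ∏ j ∈ Finset.range s, Polynomial.eval₂ (lbEv x y z) w (tw j) := by
    rw [hQ]
    have := map_prod (Polynomial.eval₂RingHom (lbEv x y z) w) tw (Finset.range s)
    simpa only [Polynomial.coe_eval₂RingHom] using this
  have main : Complex.exp (Complex.I * (t:ℂ)) ^ n * c *
      ∏ j ∈ Finset.range s, E x y z ((t + 2 * Real.pi * (j:ℝ)) / (s:ℝ)) =
      Polynomial.eval₂ (lbEv x y z) w Q := by
    rw [← hprodexp, ← Finset.prod_mul_distrib, hQeval]
    exact Finset.prod_congr rfl fun j _ => key j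
  have h5 : Polynomial.eval₂ (lbEv x y z) w Q =
      Polynomial.eval₂ (lbEv x y z) (Complex.exp (Complex.I * (t:ℂ))) (Q.contract s) := by
    conv_lhs => rw [← hexp]
    rw [Polynomial.eval₂_eq_eval_map, Polynomial.map_expand, Polynomial.expand_eval, hws,
      ← Polynomial.eval₂_eq_eval_map]
  rw [Polynomial.eval₂_mul, Polynomial.eval₂_C]
  have hlb : (lbEv x y z) (MvPolynomial.C c⁻¹) = c⁻¹ := by simp [lbEv]
  rw [hlb, ← h5, ← main]
  field_simp

lemma lbsem_factor {F G H R : ℝ → ℝ} (hF : IsRealTrigPoly F) (hG : IsRealTrigPoly G)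
    (hH : IsRealTrigPoly H) (hR : IsRealTrigPoly R) :
    LBSem (fun x y z τ => (((x - F τ)^2 + (y - G τ)^2 - (R τ)^2 : ℝ) : ℂ)
      + Complex.I * ((z - H τ : ℝ) : ℂ)) := by
  have h1 := lbsem_sub lbsem_x (lbsem_trig hF)
  have h2 := lbsem_sub lbsem_y (lbsem_trig hG)
  have h3 := lbsem_sub lbsem_z (lbsem_trig hH)
  have h4 := lbsem_trig hR
  refine lbsem_congr (fun x y z τ => ?_)
    (lbsem_add (lbsem_sub (lbsem_add (lbsem_mul h1 h1) (lbsem_mul h2 h2)) (lbsem_mul h4 h4))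
      (lbsem_mul (lbsem_const Complex.I) h3))
  push_cast
  ring

end LBAux

/-- algebraic kernel of Proposition 3.9 of the paper. There are `m : ℕ`
and a polynomial `q ∈ ℂ[X,Y,Z,V]` such that `exp(imt) · ∏_C ∏_j P_{C,j}(x,y,z,t)`
equals `q(x, y, z, exp(it))`; i.e. the loop braid product is `exp(−imt)` times a
polynomial holomorphic in the single complex variable `v = exp(it)`. -/
theorem loop_braid_product_semiholomorphic {ι : Type*} [Fintype ι] [Nonempty ι]
    (s : ι → ℕ) (hs : ∀ C, 1 ≤ s C)
    (F G H R : ι → ℝ → ℝ)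
    (hF : ∀ C, IsRealTrigPoly (F C)) (hG : ∀ C, IsRealTrigPoly (G C))
    (hH : ∀ C, IsRealTrigPoly (H C)) (hR : ∀ C, IsRealTrigPoly (R C))
    (hRpos : ∀ C τ, 0 < R C τ) :
    ∃ (m : ℕ) (q : MvPolynomial (Fin 4) ℂ),
      ∀ (x y z t : ℝ),
        Complex.exp (Complex.I * (m : ℂ) * (t : ℂ)) *
        (∏ C, ∏ j ∈ Finset.range (s C),
          ((((x - F C ((t + 2 * Real.pi * (j : ℝ)) / (s C : ℝ))) ^ 2
            + (y - G C ((t + 2 * Real.pi * (j : ℝ)) / (s C : ℝ))) ^ 2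
            - (R C ((t + 2 * Real.pi * (j : ℝ)) / (s C : ℝ))) ^ 2 : ℝ) : ℂ)
            + Complex.I * ((z - H C ((t + 2 * Real.pi * (j : ℝ)) / (s C : ℝ)) : ℝ) : ℂ))) =
        MvPolynomial.eval
          ![(x : ℂ), (y : ℂ), (z : ℂ), Complex.exp (Complex.I * (t : ℂ))] q := by
  choose n q hq using fun C =>
    lbsem_prod (hs C) (lbsem_factor (hF C) (hG C) (hH C) (hR C))
  refine ⟨∑ C, n C, MvPolynomial.rename (![3,0,1,2] : Fin 4 → Fin 4)
    ((MvPolynomial.finSuccEquiv ℂ 3).symm (∏ C, q C)), fun x y z t => ?_⟩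
  have hexp : Complex.exp (Complex.I * ((∑ C, n C : ℕ) : ℂ) * (t:ℂ)) =
      ∏ C : ι, Complex.exp (Complex.I * (t:ℂ)) ^ n C := by
    rw [Finset.prod_pow_eq_pow_sum, ← Complex.exp_nat_mul]
    congr 1
    push_cast
    ring
  have hq' : ∀ C : ι, Complex.exp (Complex.I * (t:ℂ)) ^ n C *
      ∏ j ∈ Finset.range (s C),
        ((((x - F C ((t + 2 * Real.pi * (j : ℝ)) / (s C : ℝ))) ^ 2
          + (y - G C ((t + 2 * Real.pi * (j : ℝ)) / (s C : ℝ))) ^ 2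
          - (R C ((t + 2 * Real.pi * (j : ℝ)) / (s C : ℝ))) ^ 2 : ℝ) : ℂ)
          + Complex.I * ((z - H C ((t + 2 * Real.pi * (j : ℝ)) / (s C : ℝ)) : ℝ) : ℂ)) =
      Polynomial.eval₂ (lbEv x y z) (Complex.exp (Complex.I * (t:ℂ))) (q C) :=
    fun C => hq C x y z t
  rw [hexp, ← Finset.prod_mul_distrib, Finset.prod_congr rfl fun C _ => hq' C]
  have h2 : ∏ C : ι, Polynomial.eval₂ (lbEv x y z) (Complex.exp (Complex.I*(t:ℂ))) (q C) =
      Polynomial.eval₂ (lbEv x y z) (Complex.exp (Complex.I*(t:ℂ))) (∏ C, q C) := by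
    have := map_prod (Polynomial.eval₂RingHom (lbEv x y z)
      (Complex.exp (Complex.I*(t:ℂ)))) q Finset.univ
    simpa only [Polynomial.coe_eval₂RingHom] using this.symm
  rw [h2, MvPolynomial.eval_rename]
  have h3 : (![(x:ℂ),(y:ℂ),(z:ℂ), Complex.exp (Complex.I*(t:ℂ))] ∘
      (![3,0,1,2] : Fin 4 → Fin 4)) =
      Fin.cons (Complex.exp (Complex.I*(t:ℂ))) ![(x:ℂ),(y:ℂ),(z:ℂ)] := by
    funext i
    fin_cases i <;> rfl
  rw [h3, MvPolynomial.eval_eq_eval_mv_eval', AlgEquiv.apply_symm_apply,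
    ← Polynomial.eval₂_eq_eval_map]
  rfl
end

section
/- Let g : ℝ³ × ℝ → ℂ be twice continuously differentiable with g(x, y, z, t + 2π) = g(x, y, z, t) for all (x, y, z, t). Write a = Re g and b = Im g, and let ∇ denote the gradient with respect to the three spatial variables (x, y, z). For each t ∈ ℝ define the vector field V_t : ℝ³ → ℝ³ by V_t(x,y,z) = (∇a × ∇b)(x,y,z,t) / (1 + a(x,y,z,t)² + b(x,y,z,t)²), where × is the cross product on ℝ³. Then: (i) V_{t+2π} = V_t for all t ∈ ℝ; (ii) the divergence of V_t vanishes identically, i.e. ∇·V_t = 0 on ℝ³ for every t; and (iii) V_t(x,y,z) · ∇a(x,y,z,t) = 0 and V_t(x,y,z) · ∇b(x,y,z,t) = 0 at every point, so V_t is tangent to every level set of g(·,·,·,t), in particular to the zero set {(x,y,z) : g(x,y,z,t) = 0}. -/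
open Finset Complex Real

/-- Partial derivative of `f : ℝ³ → ℝ` in the `i`-th coordinate direction at `p`. -/
noncomputable def pderiv3 (f : (Fin 3 → ℝ) → ℝ) (p : Fin 3 → ℝ) (i : Fin 3) : ℝ :=
  deriv (fun s : ℝ => f (Function.update p i s)) (p i)

/-- Gradient of `f : ℝ³ → ℝ` at `p`. -/
noncomputable def grad3 (f : (Fin 3 → ℝ) → ℝ) (p : Fin 3 → ℝ) : Fin 3 → ℝ :=
  fun i => pderiv3 f p i

lemma key_comp {F : (Fin 3 → ℝ) → ℝ} {L : (Fin 3 → ℝ) →L[ℝ] ℝ} {p : Fin 3 → ℝ}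
    (h : HasFDerivAt F L p) (i : Fin 3) :
    HasDerivAt (fun s : ℝ => F (Function.update p i s)) (L (Pi.single i 1)) (p i) := by
  have h' : HasFDerivAt F L (Function.update p i (p i)) := by rwa [Function.update_eq_self]
  exact h'.comp_hasDerivAt (p i) (hasDerivAt_update p i (p i))

lemma grad3_eq {f : (Fin 3 → ℝ) → ℝ} (hf : Differentiable ℝ f) (p : Fin 3 → ℝ) :
    grad3 f p = fun i => fderiv ℝ f p (Pi.single i 1) := by
  funext i
  exact (key_comp (hf p).hasFDerivAt i).deriv

lemma hasFDerivAt_fderiv_apply {a : (Fin 3 → ℝ) → ℝ} (ha : ContDiff ℝ 2 a)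
    (p : Fin 3 → ℝ) (v : Fin 3 → ℝ) :
    HasFDerivAt (fun q => fderiv ℝ a q v)
      ((ContinuousLinearMap.apply ℝ ℝ v).comp (fderiv ℝ (fderiv ℝ a) p)) p := by
  have ha' : ContDiff ℝ 1 (fderiv ℝ a) := ha.fderiv_right (le_refl _)
  exact (ContinuousLinearMap.apply ℝ ℝ v).hasFDerivAt.comp p
    ((ha'.differentiable one_ne_zero p).hasFDerivAt)

lemma comp_pderiv {a b : (Fin 3 → ℝ) → ℝ} (ha : ContDiff ℝ 2 a) (hb : ContDiff ℝ 2 b)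
    (p : Fin 3 → ℝ) (i j1 k1 j2 k2 : Fin 3) :
    pderiv3 (fun q => (1 + a q ^ 2 + b q ^ 2)⁻¹ *
        (fderiv ℝ a q (Pi.single j1 1) * fderiv ℝ b q (Pi.single k1 1)
          - fderiv ℝ a q (Pi.single j2 1) * fderiv ℝ b q (Pi.single k2 1))) p i
    = -(2 * a p * fderiv ℝ a p (Pi.single i 1) + 2 * b p * fderiv ℝ b p (Pi.single i 1))
        / (1 + a p ^ 2 + b p ^ 2) ^ 2 *
        (fderiv ℝ a p (Pi.single j1 1) * fderiv ℝ b p (Pi.single k1 1)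
          - fderiv ℝ a p (Pi.single j2 1) * fderiv ℝ b p (Pi.single k2 1))
      + (1 + a p ^ 2 + b p ^ 2)⁻¹ *
        (fderiv ℝ (fderiv ℝ a) p (Pi.single i 1) (Pi.single j1 1) * fderiv ℝ b p (Pi.single k1 1)
          + fderiv ℝ a p (Pi.single j1 1) * fderiv ℝ (fderiv ℝ b) p (Pi.single i 1) (Pi.single k1 1)
          - (fderiv ℝ (fderiv ℝ a) p (Pi.single i 1) (Pi.single j2 1) * fderiv ℝ b p (Pi.single k2 1)
            + fderiv ℝ a p (Pi.single j2 1) * fderiv ℝ (fderiv ℝ b) p (Pi.single i 1) (Pi.single k2 1))) := by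
  have hA : ∀ j : Fin 3, HasDerivAt (fun s : ℝ => fderiv ℝ a (Function.update p i s) (Pi.single j 1))
      (fderiv ℝ (fderiv ℝ a) p (Pi.single i 1) (Pi.single j 1)) (p i) := by
    intro j
    simpa using key_comp (hasFDerivAt_fderiv_apply ha p (Pi.single j 1)) i
  have hB : ∀ j : Fin 3, HasDerivAt (fun s : ℝ => fderiv ℝ b (Function.update p i s) (Pi.single j 1))
      (fderiv ℝ (fderiv ℝ b) p (Pi.single i 1) (Pi.single j 1)) (p i) := by
    intro j
    simpa using key_comp (hasFDerivAt_fderiv_apply hb p (Pi.single j 1)) i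
  have ha0 : HasDerivAt (fun s : ℝ => a (Function.update p i s)) (fderiv ℝ a p (Pi.single i 1)) (p i) :=
    key_comp (ha.differentiable (by norm_num) p).hasFDerivAt i
  have hb0 : HasDerivAt (fun s : ℝ => b (Function.update p i s)) (fderiv ℝ b p (Pi.single i 1)) (p i) :=
    key_comp (hb.differentiable (by norm_num) p).hasFDerivAt i
  have hden : (1 + a p ^ 2 + b p ^ 2) ≠ 0 := by positivity
  have hc := (((hasDerivAt_const (p i) (1 : ℝ)).add (ha0.pow 2)).add (hb0.pow 2)).inv
    (by simpa using hden)
  have hw := ((hA j1).mul (hB k1)).sub ((hA j2).mul (hB k2))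
  have hD := hc.mul hw
  refine (hD.deriv).trans ?_
  have : Function.update p i (p i) = p := Function.update_eq_self i p
  simp only [Pi.add_apply, Pi.mul_apply, Pi.sub_apply, Pi.pow_apply, Pi.inv_apply]
  rw [this]
  ring

lemma div_free {a b : (Fin 3 → ℝ) → ℝ} (ha : ContDiff ℝ 2 a) (hb : ContDiff ℝ 2 b)
    (p : Fin 3 → ℝ) :
    ∑ i, pderiv3
      (fun q => (1 + a q ^ 2 + b q ^ 2)⁻¹ * (crossProduct (grad3 a q) (grad3 b q)) i) p i = 0 := by
  have haD : Differentiable ℝ a := ha.differentiable (by norm_num)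
  have hbD : Differentiable ℝ b := hb.differentiable (by norm_num)
  have hfe : ∀ q, crossProduct (grad3 a q) (grad3 b q) =
      crossProduct (fun i => fderiv ℝ a q (Pi.single i 1)) (fun i => fderiv ℝ b q (Pi.single i 1)) := by
    intro q; rw [grad3_eq haD, grad3_eq hbD]
  simp only [hfe]
  simp only [Fin.sum_univ_three, cross_apply, Matrix.cons_val_zero, Matrix.cons_val_one,
    Matrix.head_cons, Matrix.cons_val_two, Matrix.tail_cons]
  rw [comp_pderiv ha hb p 0 1 2 2 1, comp_pderiv ha hb p 1 2 0 0 2,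
    comp_pderiv ha hb p 2 0 1 1 0]
  have sa : ∀ v w, fderiv ℝ (fderiv ℝ a) p v w = fderiv ℝ (fderiv ℝ a) p w v :=
    (ha.contDiffAt.isSymmSndFDerivAt (by simp))
  have sb : ∀ v w, fderiv ℝ (fderiv ℝ b) p v w = fderiv ℝ (fderiv ℝ b) p w v :=
    (hb.contDiffAt.isSymmSndFDerivAt (by simp))
  rw [sa (Pi.single 1 1) (Pi.single 0 1), sa (Pi.single 2 1) (Pi.single 0 1),
    sa (Pi.single 2 1) (Pi.single 1 1), sb (Pi.single 1 1) (Pi.single 0 1),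
    sb (Pi.single 2 1) (Pi.single 0 1), sb (Pi.single 2 1) (Pi.single 1 1)]
  ring

/-- Proposition 1.3 of the paper, analytic content. For a `C²`,
`2π`-periodic-in-time function `g : ℝ³ × ℝ → ℂ` with `a = Re g`, `b = Im g`, the field
`V_t = (∇a × ∇b)/(1 + a² + b²)` is `2π`-periodic in `t`, divergence free in the space
variables, and orthogonal to `∇a` and `∇b`, hence tangent to every level set of
`g(·,·,·,t)`, in particular to its zero set. -/
theorem ranada_field_properties (g : (Fin 3 → ℝ) → ℝ → ℂ)
    (hg : ContDiff ℝ 2 (fun q : (Fin 3 → ℝ) × ℝ => g q.1 q.2))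
    (hper : ∀ (p : Fin 3 → ℝ) (t : ℝ), g p (t + 2 * Real.pi) = g p t)
    (V : ℝ → (Fin 3 → ℝ) → Fin 3 → ℝ)
    (hV : ∀ (t : ℝ) (p : Fin 3 → ℝ),
      V t p = (1 + (g p t).re ^ 2 + (g p t).im ^ 2)⁻¹ •
        crossProduct (grad3 (fun q => (g q t).re) p) (grad3 (fun q => (g q t).im) p)) :
    (∀ (t : ℝ) (p : Fin 3 → ℝ), V (t + 2 * Real.pi) p = V t p) ∧
    (∀ (t : ℝ) (p : Fin 3 → ℝ), ∑ i, pderiv3 (fun q => V t q i) p i = 0) ∧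
    (∀ (t : ℝ) (p : Fin 3 → ℝ),
      (∑ i, V t p i * grad3 (fun q => (g q t).re) p i) = 0 ∧
      (∑ i, V t p i * grad3 (fun q => (g q t).im) p i) = 0) := by
  have hgt : ∀ t, ContDiff ℝ 2 (fun q => g q t) := fun t =>
    hg.comp (contDiff_id.prodMk contDiff_const)
  have hat : ∀ t : ℝ, ContDiff ℝ 2 (fun q => (g q t).re) := fun t =>
    (Complex.reCLM.contDiff).comp (hgt t)
  have hbt : ∀ t : ℝ, ContDiff ℝ 2 (fun q => (g q t).im) := fun t =>
    (Complex.imCLM.contDiff).comp (hgt t)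
  refine ⟨?_, ?_, ?_⟩
  · intro t p
    rw [hV, hV]
    simp only [hper]
  · intro t p
    have hcomp : ∀ i : Fin 3, (fun q => V t q i) =
        (fun q => (1 + (fun q => (g q t).re) q ^ 2 + (fun q => (g q t).im) q ^ 2)⁻¹ *
          (crossProduct (grad3 (fun q => (g q t).re) q) (grad3 (fun q => (g q t).im) q)) i) := by
      intro i; funext q
      rw [hV]
      simp [smul_eq_mul]
    simp only [hcomp]
    exact div_free (hat t) (hbt t) p
  · intro t p
    constructor <;>
    · rw [hV]
      simp only [Fin.sum_univ_three, cross_apply, Pi.smul_apply, smul_eq_mul,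
        Matrix.cons_val_zero, Matrix.cons_val_one, Matrix.head_cons,
        Matrix.cons_val_two, Matrix.tail_cons]
      ring
end

section
/- Let n ∈ ℤ, let s ≥ 1 be an integer, and let c_1, …, c_s ∈ ℂ. Define g : ℂ × ℝ → ℂ by g(u, χ) = ∏_{j=1}^{s} ( u − exp(i n χ)·c_j ). Suppose (u, χ) is a point with g(u, χ) ≠ 0 and ∂g/∂u (u, χ) = 0. Then ∂g/∂χ (u, χ) = i·n·s·g(u, χ); in particular the logarithmic derivative (∂g/∂χ)/g at such a point is purely imaginary with imaginary part n·s, which is nonzero whenever n ≠ 0. -/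
open Finset Complex Real

/-- end of Section 4 of the paper. For
`g(u,χ) = ∏_{j=1}^{s} (u − exp(inχ)·c_j)`, at any point where `g ≠ 0` and `∂g/∂u = 0`
one has `∂g/∂χ = i·n·s·g`; in particular the logarithmic derivative `(∂g/∂χ)/g` there
is purely imaginary with imaginary part `n·s`, nonzero whenever `n ≠ 0`. -/
theorem spinning_braid_no_argument_critical_points (n : ℤ) (s : ℕ) (hs : 1 ≤ s)
    (c : Fin s → ℂ) (g : ℂ → ℝ → ℂ)
    (hg : ∀ (u : ℂ) (χ : ℝ),
      g u χ = ∏ j, (u - Complex.exp (Complex.I * (n : ℂ) * (χ : ℂ)) * c j))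
    (u : ℂ) (χ : ℝ) (hne : g u χ ≠ 0) (hcrit : deriv (fun w : ℂ => g w χ) u = 0) :
    deriv (fun x : ℝ => g u x) χ = Complex.I * (n : ℂ) * (s : ℂ) * g u χ ∧
    (deriv (fun x : ℝ => g u x) χ / g u χ).re = 0 ∧
    (deriv (fun x : ℝ => g u x) χ / g u χ).im = (n : ℝ) * (s : ℝ) ∧
    (n ≠ 0 → (deriv (fun x : ℝ => g u x) χ / g u χ).im ≠ 0) := by
  set e : ℂ := Complex.exp (Complex.I * (n : ℂ) * (χ : ℂ)) with he
  -- derivative in u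
  have hdu : HasDerivAt (fun w : ℂ => g w χ)
      (∑ j, ∏ k ∈ Finset.univ.erase j, (u - e * c k)) u := by
    have : HasDerivAt (fun w : ℂ => ∏ j, (w - e * c j))
        (∑ j, (∏ k ∈ Finset.univ.erase j, (u - e * c k)) • (1 : ℂ)) u :=
      HasDerivAt.fun_finsetProd (fun j _ => by
        simpa using (hasDerivAt_id u).sub_const (e * c j))
    simp only [smul_eq_mul, mul_one] at this
    exact this.congr_of_eventuallyEq (by filter_upwards with w; rw [hg])
  have hSu : (∑ j, ∏ k ∈ Finset.univ.erase j, (u - e * c k)) = 0 := by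
    rw [← hdu.deriv]; exact hcrit
  -- derivative of χ ↦ exp(I n χ)
  have hee : HasDerivAt (fun x : ℝ => Complex.exp (Complex.I * (n : ℂ) * (x : ℂ)))
      (Complex.I * (n : ℂ) * e) χ := by
    have h1 : HasDerivAt (fun x : ℝ => (x : ℂ)) 1 χ := by
      simpa using (hasDerivAt_id χ).ofReal_comp
    have h2 := (h1.const_mul (Complex.I * (n : ℂ))).cexp
    simpa [he, mul_comm] using h2
  -- derivative in χ
  have hdχ : HasDerivAt (fun x : ℝ => g u x)
      (∑ j, (∏ k ∈ Finset.univ.erase j, (u - e * c k)) * (-(Complex.I * (n : ℂ) * e * c j)))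
      χ := by
    have : HasDerivAt (fun x : ℝ => ∏ j, (u - Complex.exp (Complex.I * (n : ℂ) * (x : ℂ)) * c j))
        (∑ j, (∏ k ∈ Finset.univ.erase j, (u - e * c k)) •
          (-(Complex.I * (n : ℂ) * e * c j))) χ :=
      HasDerivAt.fun_finsetProd (fun j _ => by
        simpa [he, mul_assoc] using ((hee.mul_const (c j)).const_sub u))
    simp only [smul_eq_mul] at this
    exact this.congr_of_eventuallyEq (by filter_upwards with x; rw [hg])
  have key : deriv (fun x : ℝ => g u x) χ = Complex.I * (n : ℂ) * (s : ℂ) * g u χ := by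
    rw [hdχ.deriv]
    have hstep : ∀ j : Fin s,
        (∏ k ∈ Finset.univ.erase j, (u - e * c k)) * (-(Complex.I * (n : ℂ) * e * c j))
        = Complex.I * (n : ℂ) * g u χ
          - Complex.I * (n : ℂ) * u * (∏ k ∈ Finset.univ.erase j, (u - e * c k)) := by
      intro j
      have hprod : (∏ k ∈ Finset.univ.erase j, (u - e * c k)) * (u - e * c j) = g u χ := by
        rw [hg, he, mul_comm]
        exact Finset.mul_prod_erase Finset.univ (fun k => u - Complex.exp (Complex.I * (n : ℂ) * (χ : ℂ)) * c k) (Finset.mem_univ j)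
      calc (∏ k ∈ Finset.univ.erase j, (u - e * c k)) * (-(Complex.I * (n : ℂ) * e * c j))
          = Complex.I * (n : ℂ) * ((∏ k ∈ Finset.univ.erase j, (u - e * c k)) * (u - e * c j))
            - Complex.I * (n : ℂ) * u * (∏ k ∈ Finset.univ.erase j, (u - e * c k)) := by ring
        _ = _ := by rw [hprod]
    rw [Finset.sum_congr rfl (fun j _ => hstep j), Finset.sum_sub_distrib]
    rw [Finset.sum_const, ← Finset.mul_sum, hSu]
    simp [mul_comm, mul_assoc, mul_left_comm]
  refine ⟨key, ?_, ?_, ?_⟩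
  · rw [key, mul_div_assoc, div_self hne]
    simp
  · rw [key, mul_div_assoc, div_self hne]
    simp
  · intro hn
    rw [key, mul_div_assoc, div_self hne]
    simp only [mul_one]
    have : (Complex.I * (n : ℂ) * (s : ℂ)).im = (n : ℝ) * (s : ℝ) := by simp
    rw [this]
    have hn' : (n : ℝ) ≠ 0 := Int.cast_ne_zero.mpr hn
    have hs' : (s : ℝ) ≠ 0 := Nat.cast_ne_zero.mpr (by omega)
    exact mul_ne_zero hn' hs'
end

section
/- Let I be a finite nonempty index set; for each C ∈ I let s_C ≥ 1 be an integer, let f_C : ℝ³ → ℂ be a map whose real and imaginary parts are polynomial functions of total degree at most d_C, and let F_C, G_C, H_C : ℝ → ℝ and R_C : ℝ → ℝ be real trigonometric polynomials with R_C(τ) > 0 for all τ; let λ > 0. For τ_j := (t + 2π(j−1))/s_C define g_λ(x,y,z,t) = ∏_{C∈I} ∏_{j=1}^{s_C} R_C(τ_j)^{d_C} · f_C( x/(λ R_C(τ_j)) − F_C(τ_j)/R_C(τ_j), y/(λ R_C(τ_j)) − G_C(τ_j)/R_C(τ_j), z/λ − H_C(τ_j) ). Then there exists a polynomial p ∈ ℂ[X,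 Y, Z, V, W] such that for all x, y, z, t ∈ ℝ: g_λ(x, y, z, t) = p(x, y, z, exp(i t), exp(−i t)). -/
open Finset Complex Real

/-- Functions of `(x,y,z,τ)` that are polynomial in `x, y, z, exp(iτ), exp(-iτ)`. -/
def P1 (g : ℝ → ℝ → ℝ → ℝ → ℂ) : Prop :=
  ∃ p : MvPolynomial (Fin 5) ℂ, ∀ x y z t : ℝ,
    g x y z t = MvPolynomial.eval
      ![(x : ℂ), (y : ℂ), (z : ℂ), Complex.exp (Complex.I * (t : ℂ)),
        Complex.exp (-(Complex.I * (t : ℂ)))] p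

lemma P1_const (a : ℂ) : P1 (fun _ _ _ _ => a) :=
  ⟨MvPolynomial.C a, fun _ _ _ _ => by simp⟩

lemma P1_x : P1 (fun x _ _ _ => (x : ℂ)) := ⟨MvPolynomial.X 0, fun _ _ _ _ => by simp⟩
lemma P1_y : P1 (fun _ y _ _ => (y : ℂ)) := ⟨MvPolynomial.X 1, fun _ _ _ _ => by simp⟩
lemma P1_z : P1 (fun _ _ z _ => (z : ℂ)) := ⟨MvPolynomial.X 2, fun _ _ _ _ => by simp⟩
lemma P1_V : P1 (fun _ _ _ t => Complex.exp (Complex.I * (t : ℂ))) :=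
  ⟨MvPolynomial.X 3, fun _ _ _ _ => by simp⟩
lemma P1_W : P1 (fun _ _ _ t => Complex.exp (-(Complex.I * (t : ℂ)))) :=
  ⟨MvPolynomial.X 4, fun _ _ _ _ => by simp⟩

lemma P1_add {g h} (hg : P1 g) (hh : P1 h) :
    P1 (fun x y z t => g x y z t + h x y z t) := by
  obtain ⟨p, hp⟩ := hg; obtain ⟨q, hq⟩ := hh
  exact ⟨p + q, fun x y z t => by simp [hp, hq]⟩

lemma P1_mul {g h} (hg : P1 g) (hh : P1 h) :
    P1 (fun x y z t => g x y z t * h x y z t) := by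
  obtain ⟨p, hp⟩ := hg; obtain ⟨q, hq⟩ := hh
  exact ⟨p * q, fun x y z t => by simp [hp, hq]⟩

lemma P1_sub {g h} (hg : P1 g) (hh : P1 h) :
    P1 (fun x y z t => g x y z t - h x y z t) := by
  obtain ⟨p, hp⟩ := hg; obtain ⟨q, hq⟩ := hh
  exact ⟨p - q, fun x y z t => by simp [hp, hq]⟩

lemma P1_pow {g} (hg : P1 g) (n : ℕ) : P1 (fun x y z t => g x y z t ^ n) := by
  obtain ⟨p, hp⟩ := hg
  exact ⟨p ^ n, fun x y z t => by simp [hp]⟩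

lemma P1_sum {κ : Type*} (S : Finset κ) (g : κ → ℝ → ℝ → ℝ → ℝ → ℂ)
    (hg : ∀ m ∈ S, P1 (g m)) : P1 (fun x y z t => ∑ m ∈ S, g m x y z t) := by
  classical
  induction S using Finset.induction_on with
  | empty => simpa using P1_const 0
  | insert a S' hm ih =>
    simp only [Finset.sum_insert hm]
    exact P1_add (hg a (Finset.mem_insert_self a S'))
      (ih fun m hmem => hg m (Finset.mem_insert_of_mem hmem))

lemma P1_prod {κ : Type*} (S : Finset κ) (g : κ → ℝ → ℝ → ℝ → ℝ → ℂ)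
    (hg : ∀ m ∈ S, P1 (g m)) : P1 (fun x y z t => ∏ m ∈ S, g m x y z t) := by
  classical
  induction S using Finset.induction_on with
  | empty => simpa using P1_const 1
  | insert a S' hm ih =>
    simp only [Finset.prod_insert hm]
    exact P1_mul (hg a (Finset.mem_insert_self a S'))
      (ih fun m hmem => hg m (Finset.mem_insert_of_mem hmem))

lemma exp_V_pow (k : ℕ) (τ : ℝ) :
    Complex.exp (((k * τ : ℝ) : ℂ) * Complex.I) = Complex.exp (Complex.I * (τ : ℂ)) ^ k := by
  rw [← Complex.exp_nat_mul]; congr 1; push_cast; ring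

lemma exp_W_pow (k : ℕ) (τ : ℝ) :
    Complex.exp (-((k * τ : ℝ) : ℂ) * Complex.I) = Complex.exp (-(Complex.I * (τ : ℂ))) ^ k := by
  rw [← Complex.exp_nat_mul]; congr 1; push_cast; ring

lemma ofReal_cos_eq (k : ℕ) (τ : ℝ) :
    ((Real.cos (k * τ) : ℝ) : ℂ) =
      (Complex.exp (Complex.I * (τ : ℂ)) ^ k + Complex.exp (-(Complex.I * (τ : ℂ))) ^ k) / 2 := by
  rw [Complex.ofReal_cos]
  show (Complex.exp (((k * τ : ℝ) : ℂ) * Complex.I) + Complex.exp (-((k * τ : ℝ) : ℂ) * Complex.I)) / 2 = _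
  rw [exp_V_pow, exp_W_pow]

lemma ofReal_sin_eq (k : ℕ) (τ : ℝ) :
    ((Real.sin (k * τ) : ℝ) : ℂ) =
      (Complex.exp (-(Complex.I * (τ : ℂ))) ^ k - Complex.exp (Complex.I * (τ : ℂ)) ^ k) *
        Complex.I / 2 := by
  rw [Complex.ofReal_sin]
  show (Complex.exp (-((k * τ : ℝ) : ℂ) * Complex.I) - Complex.exp (((k * τ : ℝ) : ℂ) * Complex.I)) *
      Complex.I / 2 = _
  rw [exp_V_pow, exp_W_pow]

lemma P1_trig {T : ℝ → ℝ} (hT : IsRealTrigPoly T) :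
    P1 (fun _ _ _ τ => ((T τ : ℝ) : ℂ)) := by
  obtain ⟨N, a, b, h⟩ := hT
  have hfun : (fun (_ _ _ τ : ℝ) => ((T τ : ℝ) : ℂ)) = fun (_ _ _ τ : ℝ) =>
      ((a 0 : ℂ)) + ∑ k ∈ Finset.Icc 1 N,
        ((a k : ℂ) * ((Complex.exp (Complex.I * (τ : ℂ)) ^ k +
            Complex.exp (-(Complex.I * (τ : ℂ))) ^ k) / 2) +
         (b k : ℂ) * ((Complex.exp (-(Complex.I * (τ : ℂ))) ^ k -
            Complex.exp (Complex.I * (τ : ℂ)) ^ k) * Complex.I / 2)) := by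
    funext x y z τ
    rw [h τ]
    push_cast
    refine congrArg (fun w => (a 0 : ℂ) + w) ?_
    refine Finset.sum_congr rfl fun k _ => ?_
    rw [← ofReal_cos_eq, ← ofReal_sin_eq]
    push_cast
    ring
  rw [hfun]
  refine P1_add (P1_const _) (P1_sum _ _ fun k _ => ?_)
  refine P1_add (P1_mul (P1_const _) ?_) (P1_mul (P1_const _) ?_)
  · exact P1_mul (P1_add (P1_pow P1_V k) (P1_pow P1_W k)) (P1_const (1/2 : ℂ)) |>.imp
      (fun p hp => fun x y z t => by rw [← hp]; ring)
  · exact P1_mul (P1_mul (P1_sub (P1_pow P1_W k) (P1_pow P1_V k)) (P1_const Complex.I))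
      (P1_const (1/2 : ℂ)) |>.imp (fun p hp => fun x y z t => by rw [← hp]; ring)

set_option maxHeartbeats 1000000 in
lemma P1_tube (d : ℕ) (P : MvPolynomial (Fin 3) ℝ) (hP : P.totalDegree ≤ d)
    {F G H R : ℝ → ℝ} (hF : IsRealTrigPoly F) (hG : IsRealTrigPoly G)
    (hH : IsRealTrigPoly H) (hR : IsRealTrigPoly R) (hRpos : ∀ τ, 0 < R τ)
    (lam : ℝ) (hlam : lam ≠ 0) :
    P1 (fun x y z τ => ((R τ : ℂ)) ^ d *
      ((MvPolynomial.eval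
        ![x / (lam * R τ) - F τ / R τ, y / (lam * R τ) - G τ / R τ, z / lam - H τ] P : ℝ) : ℂ)) := by
  classical
  have hsum : ∀ x y z τ : ℝ, (R τ) ^ d *
      MvPolynomial.eval
        ![x / (lam * R τ) - F τ / R τ, y / (lam * R τ) - G τ / R τ, z / lam - H τ] P =
      ∑ m ∈ P.support,
        (MvPolynomial.coeff m P *
          (x * lam⁻¹ - F τ) ^ (m 0) * (y * lam⁻¹ - G τ) ^ (m 1) * (z * lam⁻¹ - H τ) ^ (m 2) *
          (R τ) ^ (d - m 0 - m 1)) := by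
    intro x y z τ
    have hR0 : R τ ≠ 0 := (hRpos τ).ne'
    rw [MvPolynomial.eval_eq', Finset.mul_sum]
    refine Finset.sum_congr rfl fun m hm => ?_
    have hle : m 0 + m 1 ≤ d := by
      have h1 := MvPolynomial.le_totalDegree hm
      rw [Finsupp.sum_fintype _ _ (fun _ => rfl), Fin.sum_univ_three] at h1
      omega
    rw [Fin.prod_univ_three]
    simp only [Matrix.cons_val_zero, Matrix.cons_val_one, Matrix.head_cons,
      Matrix.cons_val_two, Matrix.tail_cons]
    have e0 : x / (lam * R τ) - F τ / R τ = (x * lam⁻¹ - F τ) / R τ := by field_simp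
    have e1 : y / (lam * R τ) - G τ / R τ = (y * lam⁻¹ - G τ) / R τ := by field_simp
    have e2 : z / lam - H τ = z * lam⁻¹ - H τ := by rw [div_eq_mul_inv]
    rw [e0, e1, e2, div_pow, div_pow, Nat.sub_sub, pow_sub₀ _ hR0 hle]
    field_simp
    ring
  have key : (fun (x y z τ : ℝ) => ((R τ : ℂ)) ^ d *
      ((MvPolynomial.eval
        ![x / (lam * R τ) - F τ / R τ, y / (lam * R τ) - G τ / R τ, z / lam - H τ] P : ℝ) : ℂ)) =
      fun (x y z τ : ℝ) => ∑ m ∈ P.support,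
        ((((MvPolynomial.coeff m P : ℝ)) : ℂ) *
          ((x : ℂ) * ((lam : ℂ))⁻¹ - (F τ : ℂ)) ^ (m 0) *
          ((y : ℂ) * ((lam : ℂ))⁻¹ - (G τ : ℂ)) ^ (m 1) *
          ((z : ℂ) * ((lam : ℂ))⁻¹ - (H τ : ℂ)) ^ (m 2) *
          (R τ : ℂ) ^ (d - m 0 - m 1)) := by
    funext x y z τ
    have := congrArg (fun r : ℝ => (r : ℂ)) (hsum x y z τ)
    push_cast at this ⊢
    exact this
  rw [key]
  refine P1_sum _ _ fun m _ => ?_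
  refine P1_mul (P1_mul (P1_mul (P1_mul (P1_const _) ?_) ?_) ?_) (P1_pow (P1_trig hR) _)
  · exact P1_pow (P1_sub (P1_mul P1_x (P1_const _)) (P1_trig hF)) _
  · exact P1_pow (P1_sub (P1_mul P1_y (P1_const _)) (P1_trig hG)) _
  · exact P1_pow (P1_sub (P1_mul P1_z (P1_const _)) (P1_trig hH)) _

/-- `g` is a finite sum of terms `c_m(x,y,z) · exp(i k_m t / s)`. -/
def HasRep (s : ℕ) (g : ℝ → ℝ → ℝ → ℝ → ℂ) : Prop :=
  ∃ (κ : Type) (S : Finset κ) (k : κ → ℤ) (c : κ → MvPolynomial (Fin 3) ℂ),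
    ∀ x y z t : ℝ, g x y z t = ∑ m ∈ S,
      MvPolynomial.eval ![(x : ℂ), (y : ℂ), (z : ℂ)] (c m) *
        Complex.exp (Complex.I * (k m : ℂ) * (t : ℂ) / (s : ℂ))

lemma HasRep_one (s : ℕ) : HasRep s (fun _ _ _ _ => 1) :=
  ⟨Unit, {()}, fun _ => 0, fun _ => 1, fun x y z t => by simp⟩

lemma HasRep_mul {s : ℕ} {g h} (hg : HasRep s g) (hh : HasRep s h) :
    HasRep s (fun x y z t => g x y z t * h x y z t) := by
  obtain ⟨κ₁, S₁, k₁, c₁, h₁⟩ := hg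
  obtain ⟨κ₂, S₂, k₂, c₂, h₂⟩ := hh
  refine ⟨κ₁ × κ₂, S₁ ×ˢ S₂, fun m => k₁ m.1 + k₂ m.2, fun m => c₁ m.1 * c₂ m.2,
    fun x y z t => ?_⟩
  dsimp only
  rw [h₁, h₂, Finset.sum_mul_sum, Finset.sum_product]
  refine Finset.sum_congr rfl fun a _ => Finset.sum_congr rfl fun b _ => ?_
  rw [map_mul]
  have : Complex.exp (Complex.I * ((k₁ a + k₂ b : ℤ) : ℂ) * (t : ℂ) / (s : ℂ)) =
      Complex.exp (Complex.I * (k₁ a : ℂ) * (t : ℂ) / (s : ℂ)) *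
      Complex.exp (Complex.I * (k₂ b : ℂ) * (t : ℂ) / (s : ℂ)) := by
    rw [← Complex.exp_add]; congr 1; push_cast; ring
  rw [this]; ring

/-- Shifted/rescaled substitution of a `P1` function has a representation. -/
lemma HasRep_shift {h} (hP : P1 h) (s j : ℕ) :
    HasRep s (fun x y z t => h x y z ((t + 2 * Real.pi * (j : ℝ)) / (s : ℝ))) := by
  classical
  obtain ⟨q, hq⟩ := hP
  refine ⟨Fin 5 →₀ ℕ, q.support, fun m => (m 3 : ℤ) - (m 4 : ℤ),
    fun m => MvPolynomial.C (MvPolynomial.coeff m q *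
        Complex.exp (Complex.I * (((m 3 : ℤ) - (m 4 : ℤ) : ℤ) : ℂ) *
          (2 * Real.pi * (j : ℝ) : ℝ) / (s : ℂ))) *
      (MvPolynomial.X 0 ^ m 0 * MvPolynomial.X 1 ^ m 1 * MvPolynomial.X 2 ^ m 2),
    fun x y z t => ?_⟩
  dsimp only
  rw [hq, MvPolynomial.eval_eq']
  refine Finset.sum_congr rfl fun m _ => ?_
  rw [Fin.prod_univ_five]
  simp only [Matrix.cons_val_zero, Matrix.cons_val_one, Matrix.head_cons, Matrix.cons_val_two,
    Matrix.tail_cons, Matrix.cons_val_three, Matrix.cons_val_four, map_mul, MvPolynomial.eval_C,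
    map_pow, MvPolynomial.eval_X]
  have key : Complex.exp (Complex.I * (((t + 2 * Real.pi * (j : ℝ)) / (s : ℝ) : ℝ) : ℂ)) ^ m 3 *
      Complex.exp (-(Complex.I * (((t + 2 * Real.pi * (j : ℝ)) / (s : ℝ) : ℝ) : ℂ))) ^ m 4 =
      Complex.exp (Complex.I * (((m 3 : ℤ) - (m 4 : ℤ) : ℤ) : ℂ) *
          ((2 * Real.pi * (j : ℝ) : ℝ) : ℂ) / (s : ℂ)) *
      Complex.exp (Complex.I * (((m 3 : ℤ) - (m 4 : ℤ) : ℤ) : ℂ) * (t : ℂ) / (s : ℂ)) := by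
    rw [← Complex.exp_nat_mul, ← Complex.exp_nat_mul, ← Complex.exp_add, ← Complex.exp_add]
    congr 1
    push_cast
    ring
  linear_combination ((x:ℂ) ^ m 0 * (y:ℂ) ^ m 1 * (z:ℂ) ^ m 2 * MvPolynomial.coeff m q) * key

lemma HasRep_prod {h} (hP : P1 h) (s n : ℕ) :
    HasRep s (fun x y z t =>
      ∏ j ∈ Finset.range n, h x y z ((t + 2 * Real.pi * (j : ℝ)) / (s : ℝ))) := by
  induction n with
  | zero => simpa using HasRep_one s
  | succ n ih =>
    have := HasRep_mul ih (HasRep_shift hP s n)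
    simpa [Finset.prod_range_succ] using this

lemma P1_periodic {h} (hP : P1 h) (x y z τ : ℝ) : h x y z (τ + 2 * Real.pi) = h x y z τ := by
  obtain ⟨q, hq⟩ := hP
  rw [hq, hq]
  have h1 : Complex.exp (Complex.I * ((τ + 2 * Real.pi : ℝ) : ℂ)) =
      Complex.exp (Complex.I * (τ : ℂ)) := by
    rw [show Complex.I * ((τ + 2 * Real.pi : ℝ) : ℂ) =
        Complex.I * (τ : ℂ) + 2 * (Real.pi : ℂ) * Complex.I by push_cast; ring,
      Complex.exp_add, Complex.exp_two_pi_mul_I, mul_one]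
  have h2 : Complex.exp (-(Complex.I * ((τ + 2 * Real.pi : ℝ) : ℂ))) =
      Complex.exp (-(Complex.I * (τ : ℂ))) := by
    rw [show -(Complex.I * ((τ + 2 * Real.pi : ℝ) : ℂ)) =
        -(Complex.I * (τ : ℂ)) + (-1 : ℤ) * (2 * (Real.pi : ℂ) * Complex.I) by push_cast; ring,
      Complex.exp_add, Complex.exp_int_mul_two_pi_mul_I, mul_one]
  rw [h1, h2]

lemma prod_periodic {h} (hP : P1 h) {s : ℕ} (hs : 1 ≤ s) (x y z t : ℝ) :
    (∏ j ∈ Finset.range s, h x y z ((t + 2 * Real.pi + 2 * Real.pi * (j : ℝ)) / (s : ℝ))) =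
    ∏ j ∈ Finset.range s, h x y z ((t + 2 * Real.pi * (j : ℝ)) / (s : ℝ)) := by
  obtain ⟨n, rfl⟩ := Nat.exists_eq_add_of_le hs
  set a : ℕ → ℂ := fun j => h x y z ((t + 2 * Real.pi * (j : ℝ)) / ((1 + n : ℕ) : ℝ)) with ha
  have hs0 : ((1 + n : ℕ) : ℝ) ≠ 0 := by positivity
  have hshift : ∀ j ∈ Finset.range (1 + n),
      h x y z ((t + 2 * Real.pi + 2 * Real.pi * (j : ℝ)) / ((1 + n : ℕ) : ℝ)) = a (j + 1) := by
    intro j _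
    rw [ha]
    congr 2
    push_cast
    ring
  rw [Finset.prod_congr rfl hshift]
  have htop : a (1 + n) = a 0 := by
    simp only [ha]
    have : (t + 2 * Real.pi * ((1 + n : ℕ) : ℝ)) / ((1 + n : ℕ) : ℝ) =
        t / ((1 + n : ℕ) : ℝ) + 2 * Real.pi := by
      field_simp
    rw [this]
    have : (t + 2 * Real.pi * ((0 : ℕ) : ℝ)) / ((1 + n : ℕ) : ℝ) = t / ((1 + n : ℕ) : ℝ) := by
      push_cast; ring_nf
    rw [this]
    exact P1_periodic hP x y z _
  calc (∏ j ∈ Finset.range (1 + n), a (j + 1))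
      = (∏ j ∈ Finset.range n, a (j + 1)) * a (n + 1) := by
        rw [Nat.add_comm 1 n, Finset.prod_range_succ]
    _ = (∏ j ∈ Finset.range n, a (j + 1)) * a 0 := by
        rw [show n + 1 = 1 + n by omega, htop]
    _ = ∏ j ∈ Finset.range (1 + n), a j := by
        rw [Nat.add_comm 1 n, Finset.prod_range_succ']
    _ = _ := rfl

lemma P1_of_HasRep {g : ℝ → ℝ → ℝ → ℝ → ℂ} {s : ℕ} (hs : 1 ≤ s) (hrep : HasRep s g)
    (hper : ∀ x y z t, g x y z (t + 2 * Real.pi) = g x y z t) : P1 g := by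
  classical
  obtain ⟨κ, S, k, c, hc⟩ := hrep
  have hs0 : (s : ℂ) ≠ 0 := Nat.cast_ne_zero.mpr (by omega)
  have hsZ : (s : ℤ) ≠ 0 := by exact_mod_cast (by omega : s ≠ 0)
  set ω : κ → ℂ := fun m => Complex.exp (2 * (Real.pi : ℂ) * Complex.I * (k m : ℂ) / (s : ℂ))
    with hω
  have hωs : ∀ m, ω m ^ s = 1 := by
    intro m
    simp only [hω]
    rw [← Complex.exp_nat_mul]
    rw [show (s : ℂ) * (2 * (Real.pi : ℂ) * Complex.I * (k m : ℂ) / (s : ℂ)) =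
        (k m : ℂ) * (2 * (Real.pi : ℂ) * Complex.I) by field_simp]
    exact Complex.exp_int_mul_two_pi_mul_I (k m)
  have geo : ∀ m, (∑ r ∈ Finset.range s, ω m ^ r) =
      if (s : ℤ) ∣ k m then (s : ℂ) else 0 := by
    intro m
    by_cases hd : (s : ℤ) ∣ k m
    · obtain ⟨κ', hκ'⟩ := id hd
      have hω1 : ω m = 1 := by
        simp only [hω]
        rw [show 2 * (Real.pi : ℂ) * Complex.I * (k m : ℂ) / (s : ℂ) =
            (κ' : ℂ) * (2 * (Real.pi : ℂ) * Complex.I) by rw [hκ']; push_cast; field_simp]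
        exact Complex.exp_int_mul_two_pi_mul_I κ'
      simp [hd, hω1]
    · have hω1 : ω m ≠ 1 := by
        intro h1
        apply hd
        simp only [hω] at h1
        rw [Complex.exp_eq_one_iff] at h1
        obtain ⟨n, hn⟩ := h1
        have h2 : (k m : ℂ) * (2 * (Real.pi : ℂ) * Complex.I) =
            ((n * s : ℤ) : ℂ) * (2 * (Real.pi : ℂ) * Complex.I) := by
          have := congrArg (fun w => w * (s : ℂ)) hn
          rw [div_mul_cancel₀ _ hs0] at this
          push_cast
          linear_combination this
        have h3 : (k m : ℂ) = ((n * s : ℤ) : ℂ) :=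
          mul_right_cancel₀ (by simp [Real.pi_ne_zero, Complex.I_ne_zero]) h2
        have h4 : k m = n * s := by exact_mod_cast h3
        exact ⟨n, by rw [h4, mul_comm]⟩
      rw [geom_sum_eq hω1, hωs, sub_self, zero_div, if_neg hd]
  have hper' : ∀ x y z (r : ℕ) t, g x y z (t + 2 * Real.pi * r) = g x y z t := by
    intro x y z r
    induction r with
    | zero => intro t; simp
    | succ r ih =>
      intro t
      have : t + 2 * Real.pi * ((r + 1 : ℕ) : ℝ) = (t + 2 * Real.pi) + 2 * Real.pi * (r : ℝ) := by
        push_cast; ring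
      rw [this, ih, hper]
  have gfilter : ∀ x y z t, g x y z t =
      ∑ m ∈ S.filter (fun m => (s : ℤ) ∣ k m),
        MvPolynomial.eval ![(x : ℂ), (y : ℂ), (z : ℂ)] (c m) *
          Complex.exp (Complex.I * (k m : ℂ) * (t : ℂ) / (s : ℂ)) := by
    intro x y z t
    refine mul_left_cancel₀ hs0 ?_
    have lhs1 : (∑ r ∈ Finset.range s, g x y z (t + 2 * Real.pi * r)) = (s : ℂ) * g x y z t := by
      rw [Finset.sum_congr rfl fun r _ => hper' x y z r t, Finset.sum_const,
        Finset.card_range, nsmul_eq_mul]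
    have rhs1 : (∑ r ∈ Finset.range s, g x y z (t + 2 * Real.pi * r)) =
        ∑ m ∈ S, MvPolynomial.eval ![(x : ℂ), (y : ℂ), (z : ℂ)] (c m) *
          Complex.exp (Complex.I * (k m : ℂ) * (t : ℂ) / (s : ℂ)) *
          (∑ r ∈ Finset.range s, ω m ^ r) := by
      rw [Finset.sum_congr rfl fun r (_ : r ∈ Finset.range s) => hc x y z (t + 2 * Real.pi * r)]
      rw [Finset.sum_comm]
      refine Finset.sum_congr rfl fun m _ => ?_
      rw [Finset.mul_sum]
      refine Finset.sum_congr rfl fun r _ => ?_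
      have : Complex.exp (Complex.I * (k m : ℂ) * ((t + 2 * Real.pi * r : ℝ) : ℂ) / (s : ℂ)) =
          Complex.exp (Complex.I * (k m : ℂ) * (t : ℂ) / (s : ℂ)) * ω m ^ r := by
        simp only [hω]
        rw [← Complex.exp_nat_mul, ← Complex.exp_add]
        congr 1
        push_cast
        ring
      rw [this]
      ring
    have step : (∑ m ∈ S, MvPolynomial.eval ![(x : ℂ), (y : ℂ), (z : ℂ)] (c m) *
          Complex.exp (Complex.I * (k m : ℂ) * (t : ℂ) / (s : ℂ)) *
          (if (s : ℤ) ∣ k m then (s : ℂ) else 0)) =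
        (s : ℂ) * ∑ m ∈ S.filter (fun m => (s : ℤ) ∣ k m),
          MvPolynomial.eval ![(x : ℂ), (y : ℂ), (z : ℂ)] (c m) *
            Complex.exp (Complex.I * (k m : ℂ) * (t : ℂ) / (s : ℂ)) := by
      rw [Finset.mul_sum, Finset.sum_filter]
      refine Finset.sum_congr rfl fun m _ => ?_
      by_cases hp : (s : ℤ) ∣ k m
      · simp only [if_pos hp]; ring
      · simp only [if_neg hp, mul_zero]
    rw [← lhs1, rhs1]
    simp only [geo]
    exact step
  -- build the polynomial
  set emb : Fin 3 → Fin 5 := Fin.castLE (by norm_num) with hemb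
  refine ⟨∑ m ∈ S.filter (fun m => (s : ℤ) ∣ k m),
    MvPolynomial.rename emb (c m) *
      (if 0 ≤ k m / (s : ℤ) then MvPolynomial.X 3 ^ (k m / (s : ℤ)).toNat
       else MvPolynomial.X 4 ^ (-(k m / (s : ℤ))).toNat), fun x y z t => ?_⟩
  rw [gfilter x y z t, map_sum]
  refine Finset.sum_congr rfl fun m hm => ?_
  obtain ⟨κ', hκ'⟩ := (Finset.mem_filter.1 hm).2
  have hdiv : k m / (s : ℤ) = κ' := by rw [hκ', Int.mul_ediv_cancel_left _ hsZ]
  rw [map_mul, MvPolynomial.eval_rename]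
  have hcomp : (![(x : ℂ), (y : ℂ), (z : ℂ), Complex.exp (Complex.I * (t : ℂ)),
      Complex.exp (-(Complex.I * (t : ℂ)))] ∘ emb) = ![(x : ℂ), (y : ℂ), (z : ℂ)] := by
    funext i
    fin_cases i <;> rfl
  rw [hcomp]
  congr 1
  have harg : Complex.I * (k m : ℂ) * (t : ℂ) / (s : ℂ) = (κ' : ℂ) * (Complex.I * (t : ℂ)) := by
    rw [hκ']; push_cast; field_simp
  rw [harg, hdiv]
  by_cases hpos : (0 : ℤ) ≤ κ'
  · rw [if_pos hpos]
    rw [map_pow, MvPolynomial.eval_X]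
    show Complex.exp ((κ' : ℂ) * (Complex.I * (t : ℂ))) =
      Complex.exp (Complex.I * (t : ℂ)) ^ κ'.toNat
    rw [← Complex.exp_nat_mul]
    congr 1
    rw [show ((κ'.toNat : ℕ) : ℂ) = ((κ'.toNat : ℤ) : ℂ) by push_cast; ring,
      Int.toNat_of_nonneg hpos]
  · rw [if_neg hpos]
    rw [map_pow, MvPolynomial.eval_X]
    show Complex.exp ((κ' : ℂ) * (Complex.I * (t : ℂ))) =
      Complex.exp (-(Complex.I * (t : ℂ))) ^ (-κ').toNat
    rw [← Complex.exp_nat_mul]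
    congr 1
    rw [show (((-κ').toNat : ℕ) : ℂ) = (((-κ').toNat : ℤ) : ℂ) by push_cast; ring,
      Int.toNat_of_nonneg (by omega)]
    push_cast
    ring

/-- algebraic kernel of Theorem 3.10 of the paper. Inserting
polynomial maps `f_C : ℝ³ → ℂ` of degree at most `d_C` into the tubes of a loop braid,
the product
`g_λ = ∏_C ∏_j R_C(τ_j)^{d_C} · f_C(x/(λR_C(τ_j)) − F_C(τ_j)/R_C(τ_j), y/(λR_C(τ_j)) − G_C(τ_j)/R_C(τ_j), z/λ − H_C(τ_j))`
is a polynomial in `x`, `y`, `z`, `exp(it)` and `exp(−it)`. -/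
theorem motion_group_product_is_polynomial {ι : Type*} [Fintype ι] [Nonempty ι]
    (s : ι → ℕ) (hs : ∀ C, 1 ≤ s C)
    (d : ι → ℕ) (f : ι → ℝ → ℝ → ℝ → ℂ)
    (A B : ι → MvPolynomial (Fin 3) ℝ)
    (hA : ∀ C, (A C).totalDegree ≤ d C) (hB : ∀ C, (B C).totalDegree ≤ d C)
    (hf : ∀ C x y z, f C x y z =
      (MvPolynomial.eval ![x, y, z] (A C) : ℂ) + Complex.I * (MvPolynomial.eval ![x, y, z] (B C) : ℂ))
    (F G H R : ι → ℝ → ℝ)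
    (hF : ∀ C, IsRealTrigPoly (F C)) (hG : ∀ C, IsRealTrigPoly (G C))
    (hH : ∀ C, IsRealTrigPoly (H C)) (hR : ∀ C, IsRealTrigPoly (R C))
    (hRpos : ∀ C τ, 0 < R C τ)
    (lam : ℝ) (hlam : 0 < lam) :
    ∃ p : MvPolynomial (Fin 5) ℂ,
      ∀ (x y z t : ℝ),
        (∏ C, ∏ j ∈ Finset.range (s C),
          ((R C ((t + 2 * Real.pi * (j : ℝ)) / (s C : ℝ)) : ℂ) ^ (d C) *
            f C
              (x / (lam * R C ((t + 2 * Real.pi * (j : ℝ)) / (s C : ℝ)))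
                - F C ((t + 2 * Real.pi * (j : ℝ)) / (s C : ℝ))
                  / R C ((t + 2 * Real.pi * (j : ℝ)) / (s C : ℝ)))
              (y / (lam * R C ((t + 2 * Real.pi * (j : ℝ)) / (s C : ℝ)))
                - G C ((t + 2 * Real.pi * (j : ℝ)) / (s C : ℝ))
                  / R C ((t + 2 * Real.pi * (j : ℝ)) / (s C : ℝ)))
              (z / lam - H C ((t + 2 * Real.pi * (j : ℝ)) / (s C : ℝ))))) =
        MvPolynomial.eval
          ![(x : ℂ), (y : ℂ), (z : ℂ), Complex.exp (Complex.I * (t : ℂ)),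
            Complex.exp (-(Complex.I * (t : ℂ)))] p := by
  have key : ∀ C : ι, P1 (fun x y z τ =>
      ((R C τ : ℂ)) ^ (d C) *
        f C (x / (lam * R C τ) - F C τ / R C τ) (y / (lam * R C τ) - G C τ / R C τ)
          (z / lam - H C τ)) := by
    intro C
    have hfeq : (fun (x y z τ : ℝ) => ((R C τ : ℂ)) ^ (d C) *
        f C (x / (lam * R C τ) - F C τ / R C τ) (y / (lam * R C τ) - G C τ / R C τ)
          (z / lam - H C τ)) =
        fun (x y z τ : ℝ) =>
          ((R C τ : ℂ)) ^ (d C) *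
            ((MvPolynomial.eval ![x / (lam * R C τ) - F C τ / R C τ,
                y / (lam * R C τ) - G C τ / R C τ, z / lam - H C τ] (A C) : ℝ) : ℂ) +
          Complex.I * (((R C τ : ℂ)) ^ (d C) *
            ((MvPolynomial.eval ![x / (lam * R C τ) - F C τ / R C τ,
                y / (lam * R C τ) - G C τ / R C τ, z / lam - H C τ] (B C) : ℝ) : ℂ)) := by
      funext x y z τ
      rw [hf]
      ring
    rw [hfeq]
    exact P1_add
      (P1_tube (d C) (A C) (hA C) (hF C) (hG C) (hH C) (hR C) (hRpos C) lam hlam.ne')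
      (P1_mul (P1_const Complex.I)
        (P1_tube (d C) (B C) (hB C) (hF C) (hG C) (hH C) (hR C) (hRpos C) lam hlam.ne'))
  have hGC : ∀ C : ι, P1 (fun x y z t => ∏ j ∈ Finset.range (s C),
      ((R C ((t + 2 * Real.pi * (j : ℝ)) / (s C : ℝ)) : ℂ) ^ (d C) *
        f C
          (x / (lam * R C ((t + 2 * Real.pi * (j : ℝ)) / (s C : ℝ)))
            - F C ((t + 2 * Real.pi * (j : ℝ)) / (s C : ℝ))
              / R C ((t + 2 * Real.pi * (j : ℝ)) / (s C : ℝ)))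
          (y / (lam * R C ((t + 2 * Real.pi * (j : ℝ)) / (s C : ℝ)))
            - G C ((t + 2 * Real.pi * (j : ℝ)) / (s C : ℝ))
              / R C ((t + 2 * Real.pi * (j : ℝ)) / (s C : ℝ)))
          (z / lam - H C ((t + 2 * Real.pi * (j : ℝ)) / (s C : ℝ))))) := by
    intro C
    exact P1_of_HasRep (hs C) (HasRep_prod (key C) (s C) (s C))
      (fun x y z t => prod_periodic (key C) (hs C) x y z t)
  obtain ⟨p, hp⟩ := P1_prod Finset.univ _ (fun C (_ : C ∈ Finset.univ) => hGC C)
  exact ⟨p, fun x y z t => hp x y z t⟩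
end
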